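/- arXiv:1908.03586 — 6 statements merged into one kernel-verified Lean document; each statement's English description precedes it below -/
import Mathlib

section
/- Let a, b, c be three distinct noncollinear points in ℝ² and let d be a point such that a lies in the interior of the segment from c to d, dist(a,d) ≥ 1, and the angle at a in triangle abc is at most 90 degrees. Then the perimeter of triangle bcd exceeds the perimeter of triangle abc by more than 1. -/
open EuclideanGeometry Real

theorem stmt_2 (a b c d : EuclideanSpace ℝ (Fin 2))
    (hncol : ¬ Collinear ℝ ({a, b, c} : Set (EuclideanSpace ℝ (Fin 2))))
    (hseg : a ∈ openSegment ℝ c d)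
    (hdist : 1 ≤ dist a d)
    (hangle : EuclideanGeometry.angle b a c ≤ π / 2) :
    dist b c + dist c d + dist d b > dist a b + dist b c + dist c a + 1 := by
  have hac : a ≠ c := by
    rintro rfl
    exact hncol (by simp; exact collinear_pair ℝ b a)
  have had : a ≠ d := by
    intro h; rw [h] at hdist; simp at hdist; linarith
  have hab : a ≠ b := by
    rintro rfl
    exact hncol (by simp; exact collinear_pair ℝ a c)
  have hsbtw : Sbtw ℝ c a d := by
    refine ⟨?_, hac.symm ∘ Eq.symm, had⟩
    rw [Wbtw, affineSegment_eq_segment]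
    exact openSegment_subset_segment ℝ c d hseg
  have hpi : ∠ c a d = π := hsbtw.angle₁₂₃_eq_pi
  have hsum : ∠ b a c + ∠ b a d = π :=
    EuclideanGeometry.angle_add_angle_eq_pi_of_angle_eq_pi b hpi
  have hbad : π / 2 ≤ ∠ b a d := by linarith
  have hcos : Real.cos (∠ b a d) ≤ 0 :=
    Real.cos_nonpos_of_pi_div_two_le_of_le hbad (by linarith [EuclideanGeometry.angle_le_pi b a d])
  have hlaw := EuclideanGeometry.law_cos b a d
  have hdpos : (0:ℝ) < dist a d := lt_of_lt_of_le one_pos hdist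
  have hbpos : (0:ℝ) < dist a b := dist_pos.2 hab
  have hbd : dist a b < dist b d := by
    rw [dist_comm b a, dist_comm d a] at hlaw
    nlinarith [dist_nonneg (x := b) (y := d), mul_nonneg (mul_nonneg hbpos.le hdpos.le) (neg_nonneg.2 hcos)]
  have hcd : dist c d = dist c a + dist a d := by
    have := hsbtw.wbtw.dist_add_dist
    rw [dist_comm c a] at this ⊢
    linarith [this]
  have hdb : dist d b = dist b d := dist_comm d b
  linarith
end

section
/- Let a, b, c be three distinct noncollinear points in ℝ² and let d be a point such that a lies strictly inside triangle bcd, dist(a,d) ≥ 1, and the angle ∠bac is at most 90 degrees (π/2 radians). Then the perimeter of triangle bcd is strictly greater than the perimeter of triangle abc plus 1. -/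
open EuclideanGeometry Real

theorem stmt_3 (a b c d : EuclideanSpace ℝ (Fin 2))
    (hncol : ¬ Collinear ℝ ({a, b, c} : Set (EuclideanSpace ℝ (Fin 2))))
    (hin : a ∈ interior (convexHull ℝ ({b, c, d} : Set (EuclideanSpace ℝ (Fin 2)))))
    (hdist : 1 ≤ dist a d)
    (hangle : EuclideanGeometry.angle b a c ≤ π / 2) :
    dist b c + dist c d + dist d b > dist a b + dist b c + dist c a + 1 := by
  have hrange : Set.range ![b, c, d] = ({b, c, d} : Set (EuclideanSpace ℝ (Fin 2))) := by
    simp [Matrix.range_cons, Matrix.range_empty]; ext x; simp; tauto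
  -- affine span of {b,c,d} is everything
  have hspan : affineSpan ℝ ({b, c, d} : Set (EuclideanSpace ℝ (Fin 2))) = ⊤ := by
    rw [← interior_convexHull_nonempty_iff_affineSpan_eq_top]
    exact ⟨a, hin⟩
  have hai : AffineIndependent ℝ ![b, c, d] := by
    rw [affineIndependent_iff_not_collinear_set]
    intro hcol
    have h1 : Module.finrank ℝ (vectorSpan ℝ ({b, c, d} : Set (EuclideanSpace ℝ (Fin 2)))) ≤ 1 :=
      hcol.finrank_le_one
    have h2 : vectorSpan ℝ ({b, c, d} : Set (EuclideanSpace ℝ (Fin 2))) = ⊤ :=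
      AffineSubspace.vectorSpan_eq_top_of_affineSpan_eq_top ℝ _ _ hspan
    rw [h2, finrank_top, finrank_euclideanSpace_fin] at h1
    norm_num at h1
  let B : AffineBasis (Fin 3) ℝ (EuclideanSpace ℝ (Fin 2)) := ⟨![b, c, d], hai, by rw [hrange]; exact hspan⟩
  have hBr : Set.range (B : Fin 3 → EuclideanSpace ℝ (Fin 2)) = ({b, c, d} : Set (EuclideanSpace ℝ (Fin 2))) := hrange
  have hpos : ∀ i, 0 < B.coord i a := by
    have := B.interior_convexHull
    rw [hBr] at this
    rw [this] at hin
    exact hin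
  set l0 := B.coord 0 a with hl0
  set l1 := B.coord 1 a with hl1
  set l2 := B.coord 2 a with hl2
  have hcomb : l0 • b + l1 • c + l2 • d = a := by
    have := B.linear_combination_coord_eq_self a
    rwa [Fin.sum_univ_three] at this
  have hsum1 : l0 + l1 + l2 = 1 := by
    have := B.sum_coord_apply_eq_one a
    rwa [Fin.sum_univ_three] at this
  have h0 : 0 < l0 := hpos 0
  have h1 : 0 < l1 := hpos 1
  have h2 : 0 < l2 := hpos 2
  have hkey : l2 • (a - d) = l0 • (b - a) + l1 • (c - a) := by
    rw [← hcomb]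
    match_scalars <;> nlinarith [hsum1]
  set s : ℝ := l0 / l2 with hs'
  set t : ℝ := l1 / l2 with ht'
  have hs : 0 < s := div_pos h0 h2
  have ht : 0 < t := div_pos h1 h2
  set u := b - a with hu
  set v := c - a with hv
  set w := a - d with hw'
  have hw : w = s • u + t • v := by
    calc w = l2⁻¹ • (l2 • w) := by rw [smul_smul, inv_mul_cancel₀ (ne_of_gt h2), one_smul]
    _ = l2⁻¹ • (l0 • u + l1 • v) := by rw [hkey]
    _ = s • u + t • v := by
        rw [smul_add, smul_smul, smul_smul, hs', ht', div_eq_inv_mul, div_eq_inv_mul]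
  -- nondegeneracy from noncollinearity of {a,b,c}
  have hcol_of : ∀ (r : ℝ), v = r • u → False := by
    intro r hr
    apply hncol
    rw [collinear_iff_of_mem (Set.mem_insert a {b, c})]
    refine ⟨u, ?_⟩
    rintro p (rfl | rfl | rfl)
    · exact ⟨0, by simp⟩
    · exact ⟨1, by simp [hu]⟩
    · exact ⟨r, by rw [← hr, hv]; simp⟩
  have hu0 : u ≠ 0 := by
    intro h
    apply hncol
    have hba : b = a := by rwa [hu, sub_eq_zero] at h
    rw [hba]
    simp [Set.insert_comm, Set.pair_comm]
    exact (collinear_pair ℝ a c).subset (by intro x hx; simp at hx ⊢; tauto)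
  have hv0 : v ≠ 0 := by
    intro h
    exact hcol_of 0 (by simp [h])
  have hU : (0:ℝ) < ‖u‖ := norm_pos_iff.2 hu0
  have hV : (0:ℝ) < ‖v‖ := norm_pos_iff.2 hv0
  -- not same ray
  have hns : ¬ SameRay ℝ (s • u) (t • v) := by
    rintro (h | h | ⟨r1, r2, hr1, hr2, heq⟩)
    · exact hu0 (by simpa [smul_eq_zero, ne_of_gt hs] using h)
    · exact hv0 (by simpa [smul_eq_zero, ne_of_gt ht] using h)
    · rw [smul_smul, smul_smul] at heq
      apply hcol_of ((r1 * s) / (r2 * t))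
      have hrt : (0:ℝ) < r2 * t := mul_pos hr2 ht
      rw [div_eq_inv_mul, ← smul_smul, heq, smul_smul, inv_mul_cancel₀ (ne_of_gt hrt), one_smul]
  have hlt : ‖w‖ < s * ‖u‖ + t * ‖v‖ := by
    have := norm_add_lt_of_not_sameRay hns
    rw [norm_smul, norm_smul, Real.norm_of_nonneg hs.le, Real.norm_of_nonneg ht.le] at this
    rw [hw]; exact this
  -- inner product facts
  have hP : (0:ℝ) ≤ inner ℝ u v := by
    have hA : InnerProductGeometry.angle u v ≤ π / 2 := by
      rw [EuclideanGeometry.angle] at hangle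
      rw [hu, hv]
      simpa [vsub_eq_sub] using hangle
    have hcos : 0 ≤ Real.cos (InnerProductGeometry.angle u v) :=
      Real.cos_nonneg_of_mem_Icc
        ⟨by linarith [InnerProductGeometry.angle_nonneg u v, Real.pi_pos], hA⟩
    rw [InnerProductGeometry.cos_angle] at hcos
    by_contra hneg
    push_neg at hneg
    have : (inner ℝ u v : ℝ) / (‖u‖ * ‖v‖) < 0 := div_neg_of_neg_of_pos hneg (by positivity)
    linarith
  have hWu : (inner ℝ w u : ℝ) = s * ‖u‖ ^ 2 + t * inner ℝ u v := by
    rw [hw, inner_add_left, real_inner_smul_left, real_inner_smul_left,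
      real_inner_self_eq_norm_sq, real_inner_comm v u]
  have hWv : (inner ℝ w v : ℝ) = s * inner ℝ u v + t * ‖v‖ ^ 2 := by
    rw [hw, inner_add_left, real_inner_smul_left, real_inner_smul_left,
      real_inner_self_eq_norm_sq]
  -- projection bounds
  have hb1 : ‖u‖ ^ 2 + (inner ℝ w u : ℝ) ≤ ‖u + w‖ * ‖u‖ := by
    calc ‖u‖ ^ 2 + (inner ℝ w u : ℝ) = inner ℝ (u + w) u := by
          rw [inner_add_left, real_inner_self_eq_norm_sq]
    _ ≤ ‖u + w‖ * ‖u‖ := real_inner_le_norm _ _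
  have hc1 : ‖v‖ ^ 2 + (inner ℝ w v : ℝ) ≤ ‖v + w‖ * ‖v‖ := by
    calc ‖v‖ ^ 2 + (inner ℝ w v : ℝ) = inner ℝ (v + w) v := by
          rw [inner_add_left, real_inner_self_eq_norm_sq]
    _ ≤ ‖v + w‖ * ‖v‖ := real_inner_le_norm _ _
  have hX : (1 + s) * ‖u‖ ≤ ‖u + w‖ := by
    have hmul : (1 + s) * ‖u‖ * ‖u‖ ≤ ‖u + w‖ * ‖u‖ := by linarith only [hb1, hWu, mul_nonneg ht.le hP]
    exact le_of_mul_le_mul_right hmul hU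
  have hY : (1 + t) * ‖v‖ ≤ ‖v + w‖ := by
    have hmul : (1 + t) * ‖v‖ * ‖v‖ ≤ ‖v + w‖ * ‖v‖ := by linarith only [hc1, hWv, mul_nonneg hs.le hP]
    exact le_of_mul_le_mul_right hmul hV
  have hw1 : (1:ℝ) ≤ ‖w‖ := by rw [hw']; rw [dist_eq_norm] at hdist; exact hdist
  -- rewrite distances
  have dab : dist a b = ‖u‖ := by rw [dist_eq_norm, hu, ← norm_neg]; congr 1; abel
  have dca : dist c a = ‖v‖ := by rw [dist_eq_norm, hv]
  have dcd : dist c d = ‖v + w‖ := by rw [dist_eq_norm, hv, hw']; congr 1; abel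
  have ddb : dist d b = ‖u + w‖ := by
    rw [dist_eq_norm, hu, hw', ← norm_neg]; congr 1; abel
  rw [dab, dca, dcd, ddb]
  linarith only [hX, hY, hlt, hw1]
end

section
/- Let φ = (1+√5)/2 be the golden ratio and let f(n) = n^(log₂ φ) for real n > 0. For all positive reals x, y, n with x ≤ n/2 and y ≤ (n−x)/2, it holds that f(x) + f(y) ≤ f(n). -/
open Real

theorem stmt_8 (x y n : ℝ) (hx : 0 < x) (hy : 0 < y) (hn : 0 < n)
    (hxn : x ≤ n / 2) (hyn : y ≤ (n - x) / 2) :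
    x ^ (Real.logb 2 ((1 + Real.sqrt 5) / 2)) +
      y ^ (Real.logb 2 ((1 + Real.sqrt 5) / 2)) ≤
    n ^ (Real.logb 2 ((1 + Real.sqrt 5) / 2)) := by
  set φ : ℝ := (1 + Real.sqrt 5) / 2 with hφdef
  set c : ℝ := Real.logb 2 φ with hcdef
  have h5 : Real.sqrt 5 ^ 2 = 5 := Real.sq_sqrt (by norm_num)
  have hs1 : (1:ℝ) < Real.sqrt 5 := by
    nlinarith [Real.sqrt_nonneg 5]
  have hs3 : Real.sqrt 5 < 3 := by
    nlinarith [Real.sqrt_nonneg 5]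
  have hφ1 : 1 < φ := by rw [hφdef]; linarith
  have hφ2 : φ < 2 := by rw [hφdef]; linarith
  have hφpos : 0 < φ := by linarith
  have hφsq : φ ^ 2 = φ + 1 := by
    rw [hφdef]; field_simp; nlinarith
  have hc0 : 0 < c := Real.logb_pos (by norm_num) hφ1
  have hc1 : c < 1 := by
    rw [hcdef, Real.logb_lt_iff_lt_rpow (by norm_num) hφpos, Real.rpow_one]; exact hφ2
  have h2c : (2:ℝ) ^ c = φ := Real.rpow_logb (by norm_num) (by norm_num) hφpos
  have h4c : (4:ℝ) ^ c = φ ^ 2 := by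
    have h : ((2:ℝ) ^ c) ^ (2:ℕ) = ((2:ℝ) ^ (2:ℕ)) ^ c := by
      rw [← Real.rpow_natCast ((2:ℝ) ^ c) 2, ← Real.rpow_natCast (2:ℝ) 2,
        ← Real.rpow_mul (by norm_num), ← Real.rpow_mul (by norm_num), mul_comm]
    norm_num at h
    rw [← h, h2c]
  -- Bernoulli bounds
  have hB : ∀ a b : ℝ, 0 < a → 0 < b → a ^ c ≤ b ^ c * (1 + c * (a / b - 1)) := by
    intro a b ha hb
    have h1 : a ^ c = b ^ c * (a / b) ^ c := by
      rw [← Real.mul_rpow hb.le (by positivity)]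
      congr 1; field_simp
    have h2 : (a / b) ^ c ≤ 1 + c * (a / b - 1) := by
      have := rpow_one_add_le_one_add_mul_self (s := a / b - 1)
        (by nlinarith [div_pos ha hb]) hc0.le hc1.le
      simpa using this
    rw [h1]
    exact mul_le_mul_of_nonneg_left h2 (by positivity)
  have hx2 := hB x (n / 2) hx (by linarith)
  have hy2 := hB y (n / 4) hy (by linarith)
  have hn2 : (n / 2) ^ c = n ^ c / φ := by
    rw [div_eq_mul_inv n 2, Real.mul_rpow hn.le (by norm_num),
      Real.inv_rpow (by norm_num), h2c, ← div_eq_mul_inv]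
  have hn4 : (n / 4) ^ c = n ^ c / φ ^ 2 := by
    rw [div_eq_mul_inv n 4, Real.mul_rpow hn.le (by norm_num),
      Real.inv_rpow (by norm_num), h4c, ← div_eq_mul_inv]
  rw [hn2] at hx2
  rw [hn4] at hy2
  have hnc : 0 < n ^ c := by positivity
  set u : ℝ := (2 * x - n) / n with hudef
  set v : ℝ := (4 * y - n) / n with hvdef
  have hxd : x / (n / 2) - 1 = u := by rw [hudef]; field_simp
  have hyd : y / (n / 4) - 1 = v := by rw [hvdef]; field_simp
  rw [hxd] at hx2
  rw [hyd] at hy2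
  have huv : φ * u + v ≤ 0 := by
    have h1 : φ * u + v = (φ * (2 * x - n) + (4 * y - n)) / n := by
      rw [hudef, hvdef]; field_simp
    rw [h1]
    apply div_nonpos_of_nonpos_of_nonneg _ hn.le
    nlinarith
  have h1 : (1:ℝ) / φ + 1 / φ ^ 2 = 1 := by
    field_simp
    linear_combination (-φ) * hφsq + ((Real.sqrt 5 - 1) / 8) * h5
  have hident : n ^ c / φ * (1 + c * u) + n ^ c / φ ^ 2 * (1 + c * v) =
      n ^ c * (1 / φ + 1 / φ ^ 2) + n ^ c * c / φ ^ 2 * (φ * u + v) := by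
    field_simp; ring
  have hterm : n ^ c * c / φ ^ 2 * (φ * u + v) ≤ 0 :=
    mul_nonpos_of_nonneg_of_nonpos (by positivity) huv
  have key : n ^ c / φ * (1 + c * u) + n ^ c / φ ^ 2 * (1 + c * v) ≤ n ^ c := by
    rw [hident, h1]; linarith
  linarith [hx2, hy2, key]
end

section
/- Let G be a graph admitting an injective straight-line drawing in ℝ² in which every edge has length between 1 and h (h ≥ 1). Then the chromatic number of G is at most ⌈√2 · (h+2)⌉². -/
/-- Floor gap lemma: the difference of floors minus one bounds below the abs difference. -/
lemma floor_gap_lt (x y : ℝ) : (|⌊x⌋ - ⌊y⌋| : ℝ) - 1 < |x - y| := by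
  have hx := Int.floor_le x
  have hx' := Int.lt_floor_add_one x
  have hy := Int.floor_le y
  have hy' := Int.lt_floor_add_one y
  have h1 : x - y ≤ |x - y| := le_abs_self _
  have h2 : -(x - y) ≤ |x - y| := neg_le_abs _
  push_cast
  rcases abs_cases ((⌊x⌋ : ℝ) - (⌊y⌋ : ℝ)) with ⟨he, _⟩ | ⟨he, _⟩ <;> rw [he] <;> linarith

/-- Equal floors force the points to be within distance one. -/
lemma floor_eq_abs_lt (x y : ℝ) (hxy : ⌊x⌋ = ⌊y⌋) : |x - y| < 1 := by
  have hx := Int.floor_le x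
  have hx' := Int.lt_floor_add_one x
  have hy := Int.floor_le y
  have hy' := Int.lt_floor_add_one y
  rw [hxy] at hx hx'
  rcases abs_cases (x - y) with ⟨he, _⟩ | ⟨he, _⟩ <;> rw [he] <;> linarith

theorem stmt_11 {V : Type*} (G : SimpleGraph V) (h : ℝ) (hh : 1 ≤ h)
    (ρ : V → EuclideanSpace ℝ (Fin 2)) (hinj : Function.Injective ρ)
    (hlen : ∀ u v, G.Adj u v → 1 ≤ dist (ρ u) (ρ v) ∧ dist (ρ u) (ρ v) ≤ h) :
    G.Colorable (⌈Real.sqrt 2 * (h + 2)⌉₊ ^ 2) := by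
  set n : ℕ := ⌈Real.sqrt 2 * (h + 2)⌉₊ with hn
  have hsqrt2 : (1:ℝ) < Real.sqrt 2 := by
    nlinarith [Real.sq_sqrt (by norm_num : (2:ℝ) ≥ 0), Real.sqrt_nonneg 2]
  have hnR : Real.sqrt 2 * (h + 2) ≤ (n:ℝ) := Nat.le_ceil _
  have hnpos : 0 < (n:ℝ) := lt_of_lt_of_le (by nlinarith) hnR
  have hnpos' : 0 < n := by exact_mod_cast hnpos
  haveI : NeZero n := ⟨hnpos'.ne'⟩
  set s : ℝ := (h + 2) / (n:ℝ) with hsdef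
  have hspos : 0 < s := by positivity
  have hns : (n:ℝ) * s = h + 2 := by
    rw [hsdef, mul_div_cancel₀ _ hnpos.ne']
  have hs_small : s * Real.sqrt 2 ≤ 1 := by
    rw [hsdef, div_mul_eq_mul_div, div_le_one hnpos]
    linarith [hnR]
  have h2s : 2 * s ^ 2 ≤ 1 := by
    nlinarith [Real.sq_sqrt (by norm_num : (2:ℝ) ≥ 0), Real.sqrt_nonneg 2]
  have hs1 : s < 1 := by nlinarith
  have hbig : h < ((n:ℝ) - 1) * s := by nlinarith
  -- the coloring
  set f : V → ZMod n × ZMod n :=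
    fun v => (((⌊ρ v 0 / s⌋ : ℤ) : ZMod n), ((⌊ρ v 1 / s⌋ : ℤ) : ZMod n)) with hf
  -- coordinate distance facts
  have hdist : ∀ u v : V, dist (ρ u) (ρ v) =
      Real.sqrt (|ρ u 0 - ρ v 0| ^ 2 + |ρ u 1 - ρ v 1| ^ 2) := by
    intro u v
    rw [EuclideanSpace.dist_eq]
    congr 1
    rw [Fin.sum_univ_two, Real.dist_eq, Real.dist_eq]
  have hcoord : ∀ (u v : V) (i : Fin 2), |ρ u i - ρ v i| ≤ dist (ρ u) (ρ v) := by
    intro u v i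
    have h0 : |ρ u i - ρ v i| ^ 2 ≤ |ρ u 0 - ρ v 0| ^ 2 + |ρ u 1 - ρ v 1| ^ 2 := by
      fin_cases i
      · show |ρ u 0 - ρ v 0| ^ 2 ≤ _
        nlinarith [sq_nonneg (|ρ u 1 - ρ v 1|)]
      · show |ρ u 1 - ρ v 1| ^ 2 ≤ _
        nlinarith [sq_nonneg (|ρ u 0 - ρ v 0|)]
    rw [hdist u v, ← Real.sqrt_sq (abs_nonneg (ρ u i - ρ v i))]
    exact Real.sqrt_le_sqrt h0
  have key : ∀ u v : V, G.Adj u v → f u ≠ f v := by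
    intro u v huv heq
    obtain ⟨hge, hle⟩ := hlen u v huv
    rw [Prod.ext_iff] at heq
    obtain ⟨he0, he1⟩ := heq
    -- turn equalities in ZMod n into divisibilities
    have hdvd : ∀ i : Fin 2, (n:ℤ) ∣ (⌊ρ u i / s⌋ - ⌊ρ v i / s⌋) := by
      intro i
      have hcast : ((⌊ρ u i / s⌋ : ℤ) : ZMod n) = ((⌊ρ v i / s⌋ : ℤ) : ZMod n) := by
        fin_cases i
        · simpa using he0
        · simpa using he1
      have hmod := (ZMod.intCast_eq_intCast_iff _ _ _).mp hcast
      exact hmod.symm.dvd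
    by_cases hz : (⌊ρ u 0 / s⌋ = ⌊ρ v 0 / s⌋) ∧ (⌊ρ u 1 / s⌋ = ⌊ρ v 1 / s⌋)
    · -- same small square: distance < 1
      have a0 : |ρ u 0 - ρ v 0| < s := by
        have h1 := floor_eq_abs_lt _ _ hz.1
        rw [div_sub_div_same, abs_div, abs_of_pos hspos, div_lt_one hspos] at h1
        exact h1
      have a1 : |ρ u 1 - ρ v 1| < s := by
        have h1 := floor_eq_abs_lt _ _ hz.2
        rw [div_sub_div_same, abs_div, abs_of_pos hspos, div_lt_one hspos] at h1
        exact h1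
      have hlt : dist (ρ u) (ρ v) < 1 := by
        rw [hdist u v]
        have hsum : |ρ u 0 - ρ v 0| ^ 2 + |ρ u 1 - ρ v 1| ^ 2 < 1 := by
          nlinarith [abs_nonneg (ρ u 0 - ρ v 0), abs_nonneg (ρ u 1 - ρ v 1)]
        have := Real.sqrt_lt_sqrt (by positivity) hsum
        simpa using this
      linarith
    · -- different small squares, same color: distance > h
      have hex : ∃ i : Fin 2, ⌊ρ u i / s⌋ - ⌊ρ v i / s⌋ ≠ 0 := by
        by_contra hc
        push_neg at hc
        exact hz ⟨sub_eq_zero.mp (hc 0), sub_eq_zero.mp (hc 1)⟩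
      obtain ⟨i, hi⟩ := hex
      have habs : (n:ℤ) ≤ |⌊ρ u i / s⌋ - ⌊ρ v i / s⌋| :=
        Int.le_of_dvd (abs_pos.mpr hi) ((dvd_abs _ _).mpr (hdvd i))
      have habsR : (n:ℝ) ≤ ((|⌊ρ u i / s⌋ - ⌊ρ v i / s⌋| : ℤ) : ℝ) := by exact_mod_cast habs
      have hgap : ((|⌊ρ u i / s⌋ - ⌊ρ v i / s⌋| : ℤ) : ℝ) * s - s < |ρ u i - ρ v i| := by
        have h1 := floor_gap_lt (ρ u i / s) (ρ v i / s)
        have h2 : |ρ u i / s - ρ v i / s| = |ρ u i - ρ v i| / s := by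
          rw [div_sub_div_same, abs_div, abs_of_pos hspos]
        rw [h2] at h1
        have h3 := mul_lt_mul_of_pos_right h1 hspos
        rw [sub_mul, div_mul_cancel₀ _ hspos.ne'] at h3
        push_cast at h3 ⊢
        linarith
      have h3 : h < |ρ u i - ρ v i| := by nlinarith
      linarith [hcoord u v i]
  have C : G.Coloring (ZMod n × ZMod n) :=
    SimpleGraph.Coloring.mk f (fun {u v} hadj => key u v hadj)
  have hc := C.colorable
  rwa [Fintype.card_prod, ZMod.card, ← sq] at hc
end

section
/- Let a, b, p, q, r, d be points in ℝ² such that: q lies on segment bd, p lies on segment cd (for some point c), a lies on segment bp and on segment cq, ∠(baq) ≥ π/2, and r is the intersection of segment bd with the line through p parallel to line ac. Then dist(d,p) > dist(a,q). -/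
open Real EuclideanGeometry
open RealInnerProductSpace

/-- A point collinear with two vertices of a (nondegenerate) triangle is not in the
interior of its convex hull. -/
lemma aux_interior_17 {E : Type*} [NormedAddCommGroup E] [InnerProductSpace ℝ E]
    (x y z a : E) (h : ¬ Collinear ℝ ({x, y, z} : Set E))
    (ha : a ∈ interior (convexHull ℝ ({x, y, z} : Set E)))
    (hcol : Collinear ℝ ({x, y, a} : Set E)) : False := by
  have hxy : y ≠ x := by
    rintro rfl
    exact h (by simpa using collinear_pair ℝ y z)
  set u : E := y - x with hu_def
  have hu : u ≠ 0 := sub_ne_zero.mpr hxy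
  have huu : ⟪u, u⟫ ≠ 0 := inner_self_ne_zero.mpr hu
  set w : E := (z - x) - (⟪z - x, u⟫ / ⟪u, u⟫) • u with hw_def
  have hw0 : w ≠ 0 := by
    intro h0
    apply h
    rw [hw_def] at h0
    have hz : z - x = (⟪z - x, u⟫ / ⟪u, u⟫) • u := sub_eq_zero.mp h0
    apply (collinear_iff_of_mem (show x ∈ ({x, y, z} : Set E) by simp)).mpr
    refine ⟨u, fun p hp => ?_⟩
    simp only [Set.mem_insert_iff, Set.mem_singleton_iff] at hp
    rcases hp with h1 | h1 | h1
    · exact ⟨0, by rw [h1]; simp⟩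
    · exact ⟨1, by rw [h1]; simp [hu_def]⟩
    · refine ⟨⟪z - x, u⟫ / ⟪u, u⟫, ?_⟩
      rw [h1, vadd_eq_add, ← hz]
      abel
  have huw : ⟪u, w⟫ = 0 := by
    rw [hw_def, inner_sub_right, real_inner_smul_right]
    rw [real_inner_comm u (z - x)]
    field_simp
    ring
  have hzw : ⟪z - x, w⟫ = ⟪w, w⟫ := by
    nth_rewrite 1 [show z - x = w + (⟪z - x, u⟫ / ⟪u, u⟫) • u by rw [hw_def]; abel]
    rw [inner_add_left, real_inner_smul_left, huw]
    ring
  have hlin : IsLinearMap ℝ (fun p : E => ⟪p, w⟫) :=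
    ⟨fun p q => inner_add_left p q w, fun c p => real_inner_smul_left p w c⟩
  have hhull : convexHull ℝ ({x, y, z} : Set E) ⊆ {p | ⟪x, w⟫ ≤ ⟪p, w⟫} := by
    apply convexHull_min _ (convex_halfSpace_ge hlin _)
    intro p hp
    simp only [Set.mem_insert_iff, Set.mem_singleton_iff] at hp
    simp only [Set.mem_setOf_eq]
    rcases hp with h1 | h1 | h1
    · rw [h1]
    · rw [h1]
      have hyx : ⟪y, w⟫ = ⟪x, w⟫ + ⟪u, w⟫ := by
        rw [hu_def, ← inner_add_left, show x + (y - x) = y by abel]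
      rw [hyx, huw]
      linarith
    · rw [h1]
      have hzx : ⟪z, w⟫ = ⟪x, w⟫ + ⟪z - x, w⟫ := by
        rw [← inner_add_left, show x + (z - x) = z by abel]
      rw [hzx, hzw]
      linarith [real_inner_self_nonneg (x := w)]
  -- a is on the line through x and y, so ⟪a, w⟫ = ⟪x, w⟫
  obtain ⟨v, hv⟩ := (collinear_iff_of_mem (show x ∈ ({x, y, a} : Set E) by simp)).mp hcol
  obtain ⟨ry, hvy⟩ := hv y (by simp)
  obtain ⟨ra, hva⟩ := hv a (by simp)
  have hry : ry ≠ 0 := by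
    intro h0
    apply hxy
    rw [hvy, h0, zero_smul, zero_vadd]
  have hvw : ⟪v, w⟫ = 0 := by
    have huv : u = ry • v := by
      rw [hu_def, hvy, vadd_eq_add]
      abel
    have hh : ry * ⟪v, w⟫ = 0 := by
      rw [← real_inner_smul_left, ← huv, huw]
    exact (mul_eq_zero.mp hh).resolve_left hry
  have haw : ⟪a, w⟫ = ⟪x, w⟫ := by
    rw [hva, vadd_eq_add, inner_add_left, real_inner_smul_left, hvw]
    ring
  -- perturb a slightly in direction -w
  have hwpos : (0:ℝ) < ⟪w, w⟫ :=
    lt_of_le_of_ne real_inner_self_nonneg (Ne.symm (inner_self_ne_zero.mpr hw0))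
  obtain ⟨ε, hε, hball⟩ := Metric.isOpen_iff.mp isOpen_interior a ha
  have hnw : (0:ℝ) < ‖w‖ := norm_pos_iff.mpr hw0
  set δ : ℝ := ε / (2 * ‖w‖) with hδ_def
  have hδ : 0 < δ := by positivity
  have hδw : δ * ‖w‖ = ε / 2 := by
    rw [hδ_def]
    field_simp
  have hmem : a - δ • w ∈ Metric.ball a ε := by
    rw [Metric.mem_ball, dist_eq_norm]
    rw [show a - δ • w - a = -(δ • w) by abel, norm_neg, norm_smul]
    rw [Real.norm_eq_abs, abs_of_pos hδ, hδw]
    linarith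
  have hin := hhull (interior_subset (hball hmem))
  simp only [Set.mem_setOf_eq, inner_sub_left, real_inner_smul_left, haw] at hin
  nlinarith

lemma seg_collinear_17 {E : Type*} [NormedAddCommGroup E] [InnerProductSpace ℝ E]
    {x y z : E} (h : z ∈ segment ℝ x y) : Collinear ℝ ({x, y, z} : Set E) := by
  obtain ⟨a1, a2, _, _, hsum, heq⟩ := h
  apply (collinear_iff_of_mem (show x ∈ ({x, y, z} : Set E) by simp)).mpr
  refine ⟨y - x, fun p hp => ?_⟩
  simp only [Set.mem_insert_iff, Set.mem_singleton_iff] at hp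
  rcases hp with h1 | h1 | h1
  · exact ⟨0, by rw [h1]; simp⟩
  · exact ⟨1, by rw [h1]; simp⟩
  · refine ⟨a2, ?_⟩
    rw [h1, vadd_eq_add, ← heq]
    have ha1 : a1 = 1 - a2 := by linarith
    rw [ha1]
    module

lemma indep_17 {E : Type*} [NormedAddCommGroup E] [InnerProductSpace ℝ E]
    {a b c : E} (h : ¬ Collinear ℝ ({b, c, a} : Set E)) :
    ∀ α β : ℝ, α • (a - b) + β • (a - c) = 0 → α = 0 ∧ β = 0 := by
  intro α β heq
  by_contra hne
  apply h
  rw [Decidable.not_and_iff_or_not] at hne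
  apply (collinear_iff_of_mem (show a ∈ ({b, c, a} : Set E) by simp)).mpr
  rcases eq_or_ne α 0 with hα | hα
  · -- then β ≠ 0 and a = c
    have hβ : β ≠ 0 := by tauto
    have hac : a - c = 0 := by
      have : β • (a - c) = 0 := by rw [← heq, hα]; module
      simpa [hβ] using (smul_eq_zero.mp this)
    refine ⟨a - b, fun p hp => ?_⟩
    simp only [Set.mem_insert_iff, Set.mem_singleton_iff] at hp
    rcases hp with h1 | h1 | h1
    · exact ⟨-1, by rw [h1, vadd_eq_add]; module⟩
    · refine ⟨0, by rw [h1, zero_smul, zero_vadd, ← sub_eq_zero]; rw [← neg_sub a c, hac]; simp⟩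
    · exact ⟨0, by rw [h1]; simp⟩
  · -- a - b = -(β/α) • (a - c)
    have hab : a - b = -(β/α) • (a - c) := by
      have h2 : α • (a - b) = -β • (a-c) := by
        rw [← sub_eq_zero, ← heq]; module
      have := congrArg (fun v => (α⁻¹ : ℝ) • v) h2
      simpa [smul_smul, inv_mul_cancel₀ hα, div_eq_inv_mul, neg_mul, mul_comm] using this
    refine ⟨a - c, fun p hp => ?_⟩
    simp only [Set.mem_insert_iff, Set.mem_singleton_iff] at hp
    rcases hp with h1 | h1 | h1
    · refine ⟨β/α, ?_⟩
      rw [h1, vadd_eq_add]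
      have : b = a - (a - b) := by abel
      rw [this, hab]
      module
    · exact ⟨-1, by rw [h1, vadd_eq_add]; module⟩
    · exact ⟨0, by rw [h1]; simp⟩

lemma pair_collinear_17 {E : Type*} [NormedAddCommGroup E] [InnerProductSpace ℝ E]
    (x y : E) : Collinear ℝ ({x, y, x} : Set E) := by
  have hs : ({x, y, x} : Set E) = {x, y} := by
    ext w; simp only [Set.mem_insert_iff, Set.mem_singleton_iff]; tauto
  rw [hs]
  exact collinear_pair ℝ x y

set_option maxHeartbeats 1000000 in
theorem stmt_17 (a b c d p q r : EuclideanSpace ℝ (Fin 2))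
    (hncol : ¬ Collinear ℝ ({b, c, d} : Set (EuclideanSpace ℝ (Fin 2))))
    (ha : a ∈ interior (convexHull ℝ ({b, c, d} : Set (EuclideanSpace ℝ (Fin 2)))))
    (hq : q ∈ segment ℝ b d)
    (hp : p ∈ segment ℝ c d)
    (hap : a ∈ segment ℝ b p)
    (haq : a ∈ segment ℝ c q)
    (hangle : π / 2 ≤ EuclideanGeometry.angle b a q)
    (hr : r ∈ segment ℝ b d)
    (hpar : ∃ t : ℝ, r = p + t • (c - a)) :
    dist d p > dist a q := by
  have hset1 : ({b, c, d} : Set (EuclideanSpace ℝ (Fin 2))) = {b, d, c} := by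
    ext w; simp only [Set.mem_insert_iff, Set.mem_singleton_iff]; tauto
  have hset2 : ({b, c, d} : Set (EuclideanSpace ℝ (Fin 2))) = {c, d, b} := by
    ext w; simp only [Set.mem_insert_iff, Set.mem_singleton_iff]; tauto
  have hset3 : ({b, c, d} : Set (EuclideanSpace ℝ (Fin 2))) = {c, b, d} := by
    ext w; simp only [Set.mem_insert_iff, Set.mem_singleton_iff]; tauto
  -- nondegeneracy facts
  have haneb : a ≠ b := by
    intro h
    exact aux_interior_17 b d c a (hset1 ▸ hncol) (hset1 ▸ ha) (h ▸ pair_collinear_17 b d)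
  have hanec : a ≠ c := by
    intro h
    exact aux_interior_17 c d b a (hset2 ▸ hncol) (hset2 ▸ ha) (h ▸ pair_collinear_17 c d)
  have hanep : a ≠ p := by
    intro h
    exact aux_interior_17 c d b a (hset2 ▸ hncol) (hset2 ▸ ha) (h ▸ seg_collinear_17 hp)
  have haneq : a ≠ q := by
    intro h
    exact aux_interior_17 b d c a (hset1 ▸ hncol) (hset1 ▸ ha) (h ▸ seg_collinear_17 hq)
  have hqneb : q ≠ b := by
    intro h
    rw [h] at haq
    exact aux_interior_17 c b d a (hset3 ▸ hncol) (hset3 ▸ ha) (seg_collinear_17 haq)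
  have habc : ¬ Collinear ℝ ({b, c, a} : Set (EuclideanSpace ℝ (Fin 2))) := by
    intro h
    exact aux_interior_17 b c d a hncol ha h
  -- destructure the segment memberships
  obtain ⟨s1, s, hs1n, hsn, hssum, hse⟩ := hap
  obtain ⟨u1, u, hu1n, hun, husum, hue⟩ := haq
  obtain ⟨m1, mu, hm1n, hmun, hmsum, hqe⟩ := hq
  obtain ⟨l1, L, hl1n, hLn, hlsum, hre⟩ := hr
  obtain ⟨t, hpar⟩ := hpar
  have hs1 : s1 = 1 - s := by linarith
  have hu1 : u1 = 1 - u := by linarith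
  have hm1 : m1 = 1 - mu := by linarith
  have hl1 : l1 = 1 - L := by linarith
  rw [hs1] at hse; rw [hu1] at hue; rw [hm1] at hqe; rw [hl1] at hre
  have hL1 : L ≤ 1 := by linarith
  -- strict bounds
  have hs_pos : 0 < s := by
    rcases lt_or_eq_of_le hsn with h | h
    · exact h
    · exfalso; apply haneb
      rw [← h] at hse
      simpa using hse.symm
  have hs_lt : s < 1 := by
    rcases lt_or_eq_of_le (show s ≤ 1 by linarith) with h | h
    · exact h
    · exfalso; apply hanep
      rw [h] at hse
      simpa using hse.symm
  have hu_pos : 0 < u := by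
    rcases lt_or_eq_of_le hun with h | h
    · exact h
    · exfalso; apply hanec
      rw [← h] at hue
      simpa using hue.symm
  have hu_lt : u < 1 := by
    rcases lt_or_eq_of_le (show u ≤ 1 by linarith) with h | h
    · exact h
    · exfalso; apply haneq
      rw [h] at hue
      simpa using hue.symm
  have hmu_pos : 0 < mu := by
    rcases lt_or_eq_of_le hmun with h | h
    · exact h
    · exfalso; apply hqneb
      rw [← h] at hqe
      exact (by simpa using hqe : b = q).symm
  obtain ⟨k, hk_def⟩ : ∃ k : ℝ, k = (1 - u) / u := ⟨_, rfl⟩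
  have hk_pos : 0 < k := hk_def ▸ div_pos (by linarith) hu_pos
  -- basic vector identities
  have hQ : q - a = k • (a - c) := by
    have h1 : u • (q - a) = (1 - u) • (a - c) := by
      linear_combination (norm := module) hue
    have h2 := congrArg (fun v : EuclideanSpace ℝ (Fin 2) => (u⁻¹ : ℝ) • v) h1
    simp only [smul_smul] at h2
    rw [inv_mul_cancel₀ (ne_of_gt hu_pos), one_smul] at h2
    rw [h2, hk_def, div_eq_inv_mul]
  have hPb : p - b = s⁻¹ • (a - b) := by
    have h1 : s • (p - b) = a - b := by
      linear_combination (norm := module) hse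
    have h2 := congrArg (fun v : EuclideanSpace ℝ (Fin 2) => (s⁻¹ : ℝ) • v) h1
    simp only [smul_smul] at h2
    rw [inv_mul_cancel₀ (ne_of_gt hs_pos), one_smul] at h2
    exact h2
  have hdb : d - b = mu⁻¹ • (q - b) := by
    have h1 : mu • (d - b) = q - b := by
      linear_combination (norm := module) hqe
    have h2 := congrArg (fun v : EuclideanSpace ℝ (Fin 2) => (mu⁻¹ : ℝ) • v) h1
    simp only [smul_smul] at h2
    rw [inv_mul_cancel₀ (ne_of_gt hmu_pos), one_smul] at h2
    exact h2
  have hrb : r - b = L • (d - b) := by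
    linear_combination (norm := module) -hre
  have hqb : q - b = k • (a - c) + (a - b) := by
    rw [← hQ]; abel
  have hrb2 : r - b = t • (c - a) + s⁻¹ • (a - b) := by
    have h1 : r - b = (p - b) + t • (c - a) := by rw [hpar]; abel
    rw [hPb] at h1
    rw [h1]; abel
  have hrb3 : r - b = (L * mu⁻¹) • (k • (a - c) + (a - b)) := by
    rw [hrb, hdb, smul_smul, hqb]
  have key : (L * mu⁻¹ - s⁻¹) • (a - b) + (L * mu⁻¹ * k + t) • (a - c) = 0 := by
    linear_combination (norm := module) hrb2 - hrb3
  obtain ⟨hA, hB⟩ := indep_17 habc _ _ key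
  have ht : t = -(s⁻¹ * k) := by linear_combination hB - k * hA
  have hrp : r - p = (s⁻¹ * k) • (a - c) := by
    have h1 : r - p = t • (c - a) := by rw [hpar]; abel
    rw [h1, ht]; module
  have hdr : d - r = (1 - L) • (d - b) := by
    linear_combination (norm := module) -hrb
  -- the angle condition
  have hcos : ⟪b - a, q - a⟫ ≤ 0 := by
    have h1 : EuclideanGeometry.angle b a q ≤ π := EuclideanGeometry.angle_le_pi b a q
    have h2 : Real.cos (EuclideanGeometry.angle b a q) ≤ 0 :=
      Real.cos_nonpos_of_pi_div_two_le_of_le hangle (by linarith [Real.pi_pos])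
    have h3 := InnerProductGeometry.cos_angle_mul_norm_mul_norm (b - a) (q - a)
    have h4 : InnerProductGeometry.angle (b - a) (q - a) = EuclideanGeometry.angle b a q := rfl
    rw [← h3, h4]
    exact mul_nonpos_of_nonpos_of_nonneg h2 (by positivity)
  have hBC : 0 ≤ ⟪a - c, a - b⟫ := by
    rw [hQ, real_inner_smul_right] at hcos
    have h4 : ⟪b - a, a - c⟫ ≤ 0 := by nlinarith
    have h5 : ⟪a - c, a - b⟫ = -⟪b - a, a - c⟫ := by
      rw [real_inner_comm, show a - b = -(b - a) by abel, inner_neg_left]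
    rw [h5]
    linarith
  -- the inner product is nonnegative
  have hinner : 0 ≤ ⟪r - p, d - r⟫ := by
    rw [hrp, hdr, hdb, real_inner_smul_left, real_inner_smul_right, real_inner_smul_right,
      hqb, inner_add_right, real_inner_smul_right]
    have h5 : 0 ≤ ⟪a - c, a - c⟫ := real_inner_self_nonneg
    refine mul_nonneg (mul_nonneg (inv_nonneg.mpr hsn) (le_of_lt hk_pos))
      (mul_nonneg (by linarith) (mul_nonneg (inv_nonneg.mpr hmun) ?_))
    nlinarith
  -- norm computations
  have hnac : (0:ℝ) < ‖a - c‖ := norm_pos_iff.mpr (sub_ne_zero.mpr hanec)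
  have hnormrp : ‖r - p‖ = (s⁻¹ * k) * ‖a - c‖ := by
    rw [hrp, norm_smul, Real.norm_eq_abs, abs_of_pos (mul_pos (inv_pos.mpr hs_pos) hk_pos)]
  have hnormq : dist a q = k * ‖a - c‖ := by
    rw [dist_eq_norm, show a - q = -(q - a) by abel, hQ, norm_neg, norm_smul,
      Real.norm_eq_abs, abs_of_pos hk_pos]
  have hsq : ‖d - p‖ ^ 2 = ‖d - r‖ ^ 2 + 2 * ⟪d - r, r - p⟫ + ‖r - p‖ ^ 2 := by
    rw [show d - p = (d - r) + (r - p) by abel]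
    exact norm_add_sq_real _ _
  have h7 : (1:ℝ) < s⁻¹ := by
    rw [lt_inv_comm₀ one_pos hs_pos]
    simpa using hs_lt
  have h8 : ‖r - p‖ > k * ‖a - c‖ := by
    rw [hnormrp]
    have hmm := mul_pos (sub_pos.mpr h7) (mul_pos hk_pos hnac)
    nlinarith [hmm]
  have h9 : ⟪d - r, r - p⟫ = ⟪r - p, d - r⟫ := real_inner_comm _ _
  rw [dist_eq_norm d p, hnormq]
  have h10 : ‖r - p‖ ^ 2 ≤ ‖d - p‖ ^ 2 := by
    rw [hsq, h9]
    nlinarith [sq_nonneg ‖d - r‖, hinner]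
  have h11 : ‖r - p‖ ≤ ‖d - p‖ :=
    (pow_le_pow_iff_left₀ (norm_nonneg _) (norm_nonneg _) two_ne_zero).mp h10
  linarith [h8, h11]
end

section
/- For every n ≥ 2, every tree on n vertices admits a planar straight-line drawing in ℝ² in which all edges have length exactly 1 (hence trees have planar edge-length ratio equal to 1). -/
open Real

set_option maxHeartbeats 1000000

namespace TreeDraw

/-- Membership of the planar vector `(X, Y)` in the closed cone of directions `[s, t]`
(for `0 < t - s < π`), expressed by two half-plane inequalities. -/
def InK (s t X Y : ℝ) : Prop :=
  0 ≤ Y * Real.cos s - X * Real.sin s ∧ Y * Real.cos t - X * Real.sin t ≤ 0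

lemma InK.zero (s t : ℝ) : InK s t 0 0 := by simp [InK]

lemma InK.add {s t X Y X' Y' : ℝ} (h : InK s t X Y) (h' : InK s t X' Y') :
    InK s t (X + X') (Y + Y') := by
  obtain ⟨a, b⟩ := h; obtain ⟨a', b'⟩ := h'
  constructor <;> nlinarith

lemma InK.unit {s t α : ℝ} (h1 : s ≤ α) (h2 : α ≤ t) (h3 : t - s ≤ π) :
    InK s t (Real.cos α) (Real.sin α) := by
  constructor
  · have h : 0 ≤ Real.sin (α - s) :=
      Real.sin_nonneg_of_nonneg_of_le_pi (by linarith) (by linarith)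
    rw [Real.sin_sub] at h; linarith
  · have h : 0 ≤ Real.sin (t - α) :=
      Real.sin_nonneg_of_nonneg_of_le_pi (by linarith) (by linarith)
    rw [Real.sin_sub] at h; linarith

lemma InK.combo {s t X1 Y1 X2 Y2 τ : ℝ} (h1 : InK s t X1 Y1) (h2 : InK s t X2 Y2)
    (h0 : 0 ≤ τ) (hle : τ ≤ 1) :
    InK s t ((1 - τ) * X1 + τ * X2) ((1 - τ) * Y1 + τ * Y2) := by
  obtain ⟨a, b⟩ := h1; obtain ⟨a', b'⟩ := h2
  constructor <;> nlinarith

/-- Core separation lemma: a vector in the cone `[s, t]` whose continuation beyond `t`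
still satisfies the lower half-plane constraint at `s'` (with `t < s'`) must vanish. -/
lemma core {s t s' X Y : ℝ} (hst : 0 < t - s) (hts' : 0 < s' - t) (hw : s' - s ≤ π / 2)
    (A : 0 ≤ Y * Real.cos s - X * Real.sin s) (B : Y * Real.cos t - X * Real.sin t ≤ 0)
    (C : 0 ≤ Y * Real.cos s' - X * Real.sin s') : X = 0 ∧ Y = 0 := by
  have hpi := Real.pi_pos
  have hs1 : 0 < Real.sin (t - s) := Real.sin_pos_of_pos_of_lt_pi hst (by linarith)
  have hc1 : 0 < Real.cos (t - s) := Real.cos_pos_of_mem_Ioo ⟨by linarith, by linarith⟩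
  have hs2 : 0 < Real.sin (s' - t) := Real.sin_pos_of_pos_of_lt_pi hts' (by linarith)
  have hc2 : 0 < Real.cos (s' - t) := Real.cos_pos_of_mem_Ioo ⟨by linarith, by linarith⟩
  have pyth := Real.sin_sq_add_cos_sq t
  set x := X * Real.cos t + Y * Real.sin t with hxdef
  set y := Y * Real.cos t - X * Real.sin t with hydef
  have e1 : Y * Real.cos s - X * Real.sin s
      = y * Real.cos (t - s) + x * Real.sin (t - s) := by
    rw [Real.cos_sub, Real.sin_sub, hxdef, hydef]
    linear_combination (-(Y * Real.cos s) + X * Real.sin s) * pyth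
  have e2 : Y * Real.cos s' - X * Real.sin s'
      = y * Real.cos (s' - t) - x * Real.sin (s' - t) := by
    rw [Real.cos_sub, Real.sin_sub, hxdef, hydef]
    linear_combination (-(Y * Real.cos s') + X * Real.sin s') * pyth
  rw [e1] at A
  rw [e2] at C
  have hy : y ≤ 0 := B
  have hx : x ≤ 0 := by nlinarith
  have hy0 : y = 0 := by nlinarith
  have hx0 : x = 0 := by nlinarith
  rw [hxdef] at hx0
  rw [hydef] at hy0
  constructor
  · linear_combination Real.cos t * hx0 - Real.sin t * hy0 - X * pyth
  · linear_combination Real.sin t * hx0 + Real.cos t * hy0 - Y * pyth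


section Construction

variable {V : Type*} (r : V) (p : V → V) (d : V → ℕ) (ι : V → ℕ) (N : ℕ)

/-- Width of the angular interval of `v`. -/
noncomputable def Wf (v : V) : ℝ := ((2 * (N : ℝ))⁻¹) ^ (d v)

open scoped Classical in
noncomputable def Lf (v : V) : ℝ :=
  if h : v ≠ r ∧ d (p v) < d v then Lf (p v) + (ι v : ℝ) * Wf d N (p v) / N else 0
termination_by d v
decreasing_by exact h.2

/-- Angle of the edge from `p v` into `v`. -/
noncomputable def th (v : V) : ℝ := Real.pi / 3 * Lf r p d ι N v

open scoped Classical in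
noncomputable def Xf (v : V) : ℝ :=
  if h : v ≠ r ∧ d (p v) < d v then Xf (p v) + Real.cos (th r p d ι N v) else 0
termination_by d v
decreasing_by exact h.2

open scoped Classical in
noncomputable def Yf (v : V) : ℝ :=
  if h : v ≠ r ∧ d (p v) < d v then Yf (p v) + Real.sin (th r p d ι N v) else 0
termination_by d v
decreasing_by exact h.2

/-- Ancestor relation induced by the parent map. -/
def Anc (a b : V) : Prop := ∃ k : ℕ, p^[k] b = a

variable {r p d ι N}
variable (hpr : p r = r) (hd : ∀ v, v ≠ r → d (p v) < d v) (hdr : d r = 0)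
  (hN : 1 ≤ N) (hιN : ∀ v, ι v < N) (hι : Function.Injective ι)

section Basic
include hd

lemma Lf_eq {v : V} (hv : v ≠ r) :
    Lf r p d ι N v = Lf r p d ι N (p v) + (ι v : ℝ) * Wf d N (p v) / N := by
  rw [Lf, dif_pos ⟨hv, hd v hv⟩]

lemma Xf_eq {v : V} (hv : v ≠ r) :
    Xf r p d ι N v = Xf r p d ι N (p v) + Real.cos (th r p d ι N v) := by
  rw [Xf, dif_pos ⟨hv, hd v hv⟩]

lemma Yf_eq {v : V} (hv : v ≠ r) :
    Yf r p d ι N v = Yf r p d ι N (p v) + Real.sin (th r p d ι N v) := by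
  rw [Yf, dif_pos ⟨hv, hd v hv⟩]

end Basic

lemma Lf_root : Lf r p d ι N r = 0 := by rw [Lf]; simp

lemma Xf_root : Xf r p d ι N r = 0 := by rw [Xf]; simp

lemma Yf_root : Yf r p d ι N r = 0 := by rw [Yf]; simp

lemma Wf_pos (hN : 1 ≤ N) (v : V) : 0 < Wf d N v := by
  have : (0 : ℝ) < 2 * N := by positivity
  exact pow_pos (by positivity) _

lemma Wf_root (hdr : d r = 0) : Wf d N r = 1 := by rw [Wf, hdr, pow_zero]

include hd hN in
lemma Wf_step {v : V} (hv : v ≠ r) :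
    Wf d N v ≤ (2 * (N : ℝ))⁻¹ * Wf d N (p v) := by
  rw [Wf, Wf, ← pow_succ']
  have hβ0 : (0:ℝ) < (2 * (N : ℝ))⁻¹ := by
    have : (0 : ℝ) < 2 * N := by positivity
    positivity
  have hβ1 : ((2 * (N : ℝ))⁻¹) ≤ 1 := by
    rw [inv_le_one_iff₀]
    right
    have : (1:ℝ) ≤ (N:ℝ) := by exact_mod_cast hN
    linarith
  exact pow_le_pow_of_le_one hβ0.le hβ1 (hd v hv)

include hpr in
lemma anc_root_of_iter (v : V) : ∀ k, p^[k] v = r → ∀ m, k ≤ m → p^[m] v = r := by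
  intro k hk m hm
  obtain ⟨j, rfl⟩ := Nat.exists_eq_add_of_le hm
  rw [Nat.add_comm, Function.iterate_add_apply, hk]
  exact Function.iterate_fixed hpr j

include hpr hd in
lemma root_anc (v : V) : Anc p r v := by
  by_cases hvr : v = r
  · exact ⟨0, hvr⟩
  · have : d (p v) < d v := hd v hvr
    have ih : Anc p r (p v) := root_anc (p v)
    obtain ⟨k, hk⟩ := ih
    exact ⟨k + 1, by rwa [Function.iterate_succ_apply]⟩
termination_by d v

include hpr hd in
lemma anc_of_ne_root {a b : V} (h : Anc p a b) (k : ℕ) (hk : p^[k] b = a) (hbr : b = r) :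
    a = r := by
  subst hbr
  rw [Function.iterate_fixed hpr] at hk
  exact hk.symm

include hpr hd in
lemma anc_d_lt {a b : V} : ∀ k : ℕ, p^[k] b = a → a = b ∨ d a < d b := by
  intro k
  induction k generalizing b with
  | zero => intro h; exact Or.inl h.symm
  | succ k ih =>
    intro hk
    rw [Function.iterate_succ_apply] at hk
    by_cases hbr : b = r
    · subst hbr
      rw [hpr, Function.iterate_fixed hpr] at hk
      exact Or.inl hk.symm
    · rcases ih hk with h | h
      · exact Or.inr (h ▸ hd b hbr)
      · exact Or.inr (h.trans (hd b hbr))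


lemma InK.of_eq {s t X Y X' Y' : ℝ} (h : InK s t X Y) (hX : X = X') (hY : Y = Y') :
    InK s t X' Y' := hX ▸ hY ▸ h

section Main

include hd hN hιN in
lemma nest_step {v : V} (hv : v ≠ r) :
    Lf r p d ι N (p v) ≤ Lf r p d ι N v ∧
      Lf r p d ι N v + Wf d N v ≤ Lf r p d ι N (p v) + ((ι v : ℝ) + 2⁻¹) * (Wf d N (p v) / N) ∧
      Lf r p d ι N v + Wf d N v ≤ Lf r p d ι N (p v) + Wf d N (p v) := by
  have hL := Lf_eq (N := N) (ι := ι) hd hv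
  have hW := Wf_step hd hN hv
  have hWp := Wf_pos (d := d) (N := N) hN (p v)
  have hN' : (1:ℝ) ≤ (N:ℝ) := by exact_mod_cast hN
  have hNpos : (0:ℝ) < N := by linarith
  have hιv : (ι v : ℝ) + 1 ≤ (N : ℝ) := by exact_mod_cast hιN v
  have hβ : (2 * (N:ℝ))⁻¹ * Wf d N (p v) = 2⁻¹ * (Wf d N (p v) / N) := by
    rw [mul_inv]; ring
  rw [hβ] at hW
  have hdivpos : 0 < Wf d N (p v) / N := by positivity
  refine ⟨?_, ?_, ?_⟩
  · rw [hL]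
    have : 0 ≤ (ι v : ℝ) * (Wf d N (p v) / N) := by positivity
    rw [mul_div_assoc]
    linarith
  · rw [hL, mul_div_assoc]
    nlinarith
  · rw [hL, mul_div_assoc]
    have h1 : ((ι v : ℝ) + 1) * (Wf d N (p v) / N) ≤ (N:ℝ) * (Wf d N (p v) / N) := by
      exact mul_le_mul_of_nonneg_right hιv hdivpos.le
    have h2 : (N:ℝ) * (Wf d N (p v) / N) = Wf d N (p v) := by field_simp
    nlinarith

include hpr hd hN hιN in
lemma anc_nest {a : V} : ∀ (k : ℕ) (b : V), p^[k] b = a →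
    Lf r p d ι N a ≤ Lf r p d ι N b ∧
      Lf r p d ι N b + Wf d N b ≤ Lf r p d ι N a + Wf d N a := by
  intro k
  induction k with
  | zero =>
    intro b hb
    simp only [Function.iterate_zero_apply] at hb
    cases hb
    exact ⟨le_refl _, le_refl _⟩
  | succ k ih =>
    intro b hb
    rw [Function.iterate_succ_apply] at hb
    by_cases hbr : b = r
    · have hab : a = b := by
        subst hbr
        rw [hpr] at hb
        rw [← hb, Function.iterate_fixed hpr]
      cases hab
      exact ⟨le_refl _, le_refl _⟩
    · obtain ⟨ih1, ih2⟩ := ih (p b) hb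
      obtain ⟨s1, _, s3⟩ := nest_step hd hN hιN hbr
      exact ⟨le_trans ih1 s1, by linarith⟩

include hpr hd hdr hN hιN in
lemma range0 (v : V) : 0 ≤ Lf r p d ι N v ∧ Lf r p d ι N v + Wf d N v ≤ 1 := by
  obtain ⟨k, hk⟩ := root_anc hpr hd v
  have h := anc_nest hpr hd hN hιN k v hk
  rw [Lf_root, Wf_root hdr] at h
  constructor <;> linarith [h.1, h.2]

include hpr hd hdr hN hιN in
lemma Wf_le_one (v : V) : Wf d N v ≤ 1 := by
  have h := range0 hpr hd hdr hN hιN v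
  linarith [h.1, h.2]

include hpr hd hdr hN hιN in
lemma Lf_le_one (v : V) : Lf r p d ι N v ≤ 1 := by
  have h := range0 hpr hd hdr hN hιN v
  have := Wf_pos (d := d) (N := N) hN v
  linarith [h.1, h.2]

include hd hN hιN in
lemma sib_gap {a b : V} (ha : a ≠ r) (hb : b ≠ r) (hpab : p a = p b) (hab : ι a < ι b) :
    Lf r p d ι N a + Wf d N a < Lf r p d ι N b := by
  obtain ⟨_, s2, _⟩ := nest_step hd hN hιN ha
  have hLb := Lf_eq (N := N) (ι := ι) hd hb
  rw [← hpab] at hLb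
  have hWp := Wf_pos (d := d) (N := N) hN (p a)
  have hN' : (1:ℝ) ≤ (N:ℝ) := by exact_mod_cast hN
  have hNpos : (0:ℝ) < N := by linarith
  have hdivpos : 0 < Wf d N (p a) / N := by positivity
  have hι' : (ι a : ℝ) + 1 ≤ (ι b : ℝ) := by exact_mod_cast hab
  rw [hLb, mul_div_assoc]
  nlinarith

include hpr hd hdr hN hιN in
lemma cos_th_pos (v : V) : 0 < Real.cos (th r p d ι N v) := by
  have h0 := (range0 hpr hd hdr hN hιN v).1
  have h1 := Lf_le_one hpr hd hdr hN hιN v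
  have hpi := Real.pi_pos
  apply Real.cos_pos_of_mem_Ioo
  constructor
  · rw [th]; nlinarith
  · rw [th]; nlinarith

include hpr hd hdr hN hιN in
lemma xgain : ∀ (k : ℕ) (u v : V), p^[k] u = v →
    Xf r p d ι N v ≤ Xf r p d ι N u ∧ (v ≠ u → Xf r p d ι N v < Xf r p d ι N u) := by
  intro k
  induction k with
  | zero =>
    intro u v hv
    simp only [Function.iterate_zero_apply] at hv
    cases hv
    exact ⟨le_refl _, fun h => absurd rfl h⟩
  | succ k ih =>
    intro u v hv
    rw [Function.iterate_succ_apply] at hv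
    by_cases hur : u = r
    · have huv : v = u := by
        subst hur
        rw [hpr] at hv
        rw [← hv, Function.iterate_fixed hpr]
      cases huv
      exact ⟨le_refl _, fun h => absurd rfl h⟩
    · have ih' := (ih (p u) v hv).1
      have hc := cos_th_pos hpr hd hdr hN hιN u
      have hX := Xf_eq (N := N) (ι := ι) hd hur
      exact ⟨by linarith, fun _ => by linarith⟩

include hpr hd hdr hN hιN in
lemma inv : ∀ (k : ℕ) (u v : V), v ≠ r → p^[k] u = v →
    InK (Real.pi / 3 * Lf r p d ι N v)
      (Real.pi / 3 * (Lf r p d ι N v + Wf d N v))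
      (Xf r p d ι N u - Xf r p d ι N (p v)) (Yf r p d ι N u - Yf r p d ι N (p v)) := by
  intro k
  induction k with
  | zero =>
    intro u v hv hu
    simp only [Function.iterate_zero_apply] at hu
    cases hu
    have hW := Wf_pos (d := d) (N := N) hN u
    have hW1 := Wf_le_one hpr hd hdr hN hιN u
    have hpi := Real.pi_pos
    refine InK.of_eq (InK.unit (α := th r p d ι N u) ?_ ?_ ?_) ?_ ?_
    · rw [th]
    · rw [th]
      exact mul_le_mul_of_nonneg_left (by linarith) (by positivity)
    · nlinarith [mul_le_mul_of_nonneg_left hW1 hpi.le]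
    · rw [Xf_eq (N := N) (ι := ι) hd hv]; ring
    · rw [Yf_eq (N := N) (ι := ι) hd hv]; ring
  | succ k ih =>
    intro u v hv hu
    have hur : u ≠ r := by
      rintro rfl
      rw [Function.iterate_fixed hpr] at hu
      exact hv hu.symm
    have hanc := anc_nest hpr hd hN hιN (k+1) u hu
    rw [Function.iterate_succ_apply] at hu
    have IH := ih (p u) v hv hu
    have hWu := Wf_pos (d := d) (N := N) hN u
    have hWv := Wf_pos (d := d) (N := N) hN v
    have hWv1 := Wf_le_one hpr hd hdr hN hιN v
    have hpi := Real.pi_pos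
    have step : InK (Real.pi / 3 * Lf r p d ι N v)
        (Real.pi / 3 * (Lf r p d ι N v + Wf d N v))
        (Real.cos (th r p d ι N u)) (Real.sin (th r p d ι N u)) := by
      refine InK.unit ?_ ?_ ?_
      · rw [th]
        exact mul_le_mul_of_nonneg_left hanc.1 (by positivity)
      · rw [th]
        have h2 : Lf r p d ι N u ≤ Lf r p d ι N v + Wf d N v := by linarith [hanc.2]
        exact mul_le_mul_of_nonneg_left h2 (by positivity)
      · nlinarith [mul_le_mul_of_nonneg_left hWv1 hpi.le]
    refine InK.of_eq (InK.add IH step) ?_ ?_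
    · rw [Xf_eq (N := N) (ι := ι) hd hur]; ring
    · rw [Yf_eq (N := N) (ι := ι) hd hur]; ring


include hpr hd in
lemma lca {a b : V} (hab : ¬ Anc p a b) (hba : ¬ Anc p b a) :
    ∃ m g g', p g = m ∧ p g' = m ∧ g ≠ r ∧ g' ≠ r ∧ g ≠ g' ∧ Anc p g a ∧ Anc p g' b ∧
      Anc p m a ∧ Anc p m b ∧ (g = a ∨ Anc p g (p a)) ∧ (g' = b ∨ Anc p g' (p b)) := by
  classical
  have hPex : ∃ k, Anc p (p^[k] a) b := by
    obtain ⟨k, hk⟩ := root_anc hpr hd a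
    exact ⟨k, hk ▸ root_anc hpr hd b⟩
  set k := Nat.find hPex with hkdef
  have hk : Anc p (p^[k] a) b := Nat.find_spec hPex
  have hkpos : 0 < k := by
    rcases Nat.eq_zero_or_pos k with h | h
    · exfalso; apply hab; have := hk; rw [h] at this; simpa using this
    · exact h
  have hiter : p^[k-1+1] a = p^[k] a := by congr 1; omega
  have hpg : p (p^[k-1] a) = p^[k] a :=
    (Function.iterate_succ_apply' p (k-1) a).symm.trans hiter
  have hgr : p^[k-1] a ≠ r := by
    intro h
    exact Nat.find_min hPex (show k - 1 < k by omega) (h ▸ root_anc hpr hd b)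
  obtain ⟨j0, hj0⟩ := hk
  have hQex : ∃ j, p^[j] b = p^[k] a := ⟨j0, hj0⟩
  set j := Nat.find hQex with hjdef
  have hj : p^[j] b = p^[k] a := Nat.find_spec hQex
  have hjpos : 0 < j := by
    rcases Nat.eq_zero_or_pos j with h | h
    · exfalso
      apply hba
      refine ⟨k, ?_⟩
      rw [h] at hj
      simpa using hj.symm
    · exact h
  have hjiter : p^[j-1+1] b = p^[j] b := by congr 1; omega
  have hpg' : p (p^[j-1] b) = p^[k] a :=
    (Function.iterate_succ_apply' p (j-1) b).symm.trans (hjiter.trans hj)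
  have hg'r : p^[j-1] b ≠ r := by
    intro h
    apply Nat.find_min hQex (show j - 1 < j by omega)
    rw [h, ← hpr, ← h, hpg']
  have hgg' : p^[k-1] a ≠ p^[j-1] b := by
    intro h
    exact Nat.find_min hPex (show k - 1 < k by omega) ⟨j - 1, h.symm⟩
  refine ⟨p^[k] a, p^[k-1] a, p^[j-1] b, hpg, hpg', hgr, hg'r, hgg',
    ⟨k-1, rfl⟩, ⟨j-1, rfl⟩, ⟨k, rfl⟩, ⟨j, hj⟩, ?_, ?_⟩
  · rcases Nat.eq_zero_or_pos (k-1) with h | h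
    · left; rw [h]; simp
    · right
      refine ⟨k-2, ?_⟩
      rw [← Function.iterate_succ_apply]
      congr 1; omega
  · rcases Nat.eq_zero_or_pos (j-1) with h | h
    · left; rw [h]; simp
    · right
      refine ⟨j-2, ?_⟩
      rw [← Function.iterate_succ_apply]
      congr 1; omega

include hpr hd hdr hN hιN hι in
lemma cone_disj {g g' : V} (hgr : g ≠ r) (hg'r : g' ≠ r) (hgg' : g ≠ g')
    (hpgg' : p g = p g') {P Q : ℝ}
    (hKg : InK (Real.pi / 3 * Lf r p d ι N g)
      (Real.pi / 3 * (Lf r p d ι N g + Wf d N g)) P Q)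
    (hKg' : InK (Real.pi / 3 * Lf r p d ι N g')
      (Real.pi / 3 * (Lf r p d ι N g' + Wf d N g')) P Q) :
    P = 0 ∧ Q = 0 := by
  have hpi := Real.pi_pos
  have hWg := Wf_pos (d := d) (N := N) hN g
  have hWg' := Wf_pos (d := d) (N := N) hN g'
  have hL0g := (range0 hpr hd hdr hN hιN g).1
  have hL0g' := (range0 hpr hd hdr hN hιN g').1
  have hL1g := Lf_le_one hpr hd hdr hN hιN g
  have hL1g' := Lf_le_one hpr hd hdr hN hιN g'
  have hιne : ι g ≠ ι g' := fun h => hgg' (hι h)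
  have key : Q = 0 ∧ P = 0 := by
    rcases lt_or_gt_of_ne hιne with hlt | hlt
    · have hgap := sib_gap hd hN hιN hgr hg'r hpgg' hlt
      have := core (s := Real.pi / 3 * Lf r p d ι N g)
        (t := Real.pi / 3 * (Lf r p d ι N g + Wf d N g))
        (s' := Real.pi / 3 * Lf r p d ι N g')
        (by nlinarith) (by nlinarith) (by nlinarith) hKg.1 hKg.2 hKg'.1
      exact ⟨this.2, this.1⟩
    · have hgap := sib_gap hd hN hιN hg'r hgr hpgg'.symm hlt
      have := core (s := Real.pi / 3 * Lf r p d ι N g')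
        (t := Real.pi / 3 * (Lf r p d ι N g' + Wf d N g'))
        (s' := Real.pi / 3 * Lf r p d ι N g)
        (by nlinarith) (by nlinarith) (by nlinarith) hKg'.1 hKg'.2 hKg.1
      exact ⟨this.2, this.1⟩
  exact ⟨key.2, key.1⟩

include hpr hd hdr hN hιN hι in
lemma sep {a b m g g' : V} (hpg : p g = m) (hpg' : p g' = m) (hgr : g ≠ r) (hg'r : g' ≠ r)
    (hgg' : g ≠ g') (hga : Anc p g a) (hg'b : Anc p g' b)
    (hXY : Xf r p d ι N a = Xf r p d ι N b ∧ Yf r p d ι N a = Yf r p d ι N b) :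
    Xf r p d ι N a = Xf r p d ι N m ∧ Yf r p d ι N a = Yf r p d ι N m := by
  obtain ⟨ka, hka⟩ := hga
  obtain ⟨kb, hkb⟩ := hg'b
  have Ka := inv hpr hd hdr hN hιN ka a g hgr hka
  have Kb := inv hpr hd hdr hN hιN kb b g' hg'r hkb
  rw [hpg] at Ka
  rw [hpg'] at Kb
  rw [← hXY.1, ← hXY.2] at Kb
  have hpi := Real.pi_pos
  have hWg := Wf_pos (d := d) (N := N) hN g
  have hWg' := Wf_pos (d := d) (N := N) hN g'
  have hL0g := (range0 hpr hd hdr hN hιN g).1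
  have hL0g' := (range0 hpr hd hdr hN hιN g').1
  have hL1g := Lf_le_one hpr hd hdr hN hιN g
  have hL1g' := Lf_le_one hpr hd hdr hN hιN g'
  have hιne : ι g ≠ ι g' := fun h => hgg' (hι h)
  have key : Xf r p d ι N a - Xf r p d ι N m = 0 ∧ Yf r p d ι N a - Yf r p d ι N m = 0 := by
    rcases lt_or_gt_of_ne hιne with hlt | hlt
    · have hgap := sib_gap hd hN hιN hgr hg'r (hpg.trans hpg'.symm) hlt
      exact core (s := Real.pi / 3 * Lf r p d ι N g)
        (t := Real.pi / 3 * (Lf r p d ι N g + Wf d N g))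
        (s' := Real.pi / 3 * Lf r p d ι N g')
        (by nlinarith) (by nlinarith) (by nlinarith) Ka.1 Ka.2 Kb.1
    · have hgap := sib_gap hd hN hιN hg'r hgr (hpg'.trans hpg.symm) hlt
      exact core (s := Real.pi / 3 * Lf r p d ι N g')
        (t := Real.pi / 3 * (Lf r p d ι N g' + Wf d N g'))
        (s' := Real.pi / 3 * Lf r p d ι N g)
        (by nlinarith) (by nlinarith) (by nlinarith) Kb.1 Kb.2 Ka.1
  constructor <;> linarith [key.1, key.2]

include hpr hd hdr hN hιN hι in
lemma inj {a b : V} (hX : Xf r p d ι N a = Xf r p d ι N b)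
    (hY : Yf r p d ι N a = Yf r p d ι N b) : a = b := by
  by_contra hne
  by_cases h1 : Anc p a b
  · obtain ⟨k, hk⟩ := h1
    have := (xgain hpr hd hdr hN hιN k b a hk).2 hne
    linarith
  by_cases h2 : Anc p b a
  · obtain ⟨k, hk⟩ := h2
    have := (xgain hpr hd hdr hN hιN k a b hk).2 (fun h => hne h.symm)
    linarith
  obtain ⟨m, g, g', hpg, hpg', hgr, hg'r, hgg', hga, hg'b, hma, hmb, _, _⟩ :=
    lca hpr hd h1 h2
  have hsep := sep hpr hd hdr hN hιN hι hpg hpg' hgr hg'r hgg' hga hg'b ⟨hX, hY⟩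
  have ham : a ≠ m := by
    rintro rfl
    exact h1 hmb
  obtain ⟨km, hkm⟩ := hma
  have := (xgain hpr hd hdr hN hιN km a m hkm).2 (Ne.symm ham)
  linarith [hsep.1]


include hpr hd hdr hN hιN in
lemma edge_in_cone {c m g : V} (hgr : g ≠ r) (hcr : c ≠ r) (hpg : p g = m)
    (hganc : Anc p g c) (hgpc : g = c ∨ Anc p g (p c)) {τ : ℝ} (h0 : 0 ≤ τ) (h1 : τ ≤ 1) :
    InK (Real.pi / 3 * Lf r p d ι N g) (Real.pi / 3 * (Lf r p d ι N g + Wf d N g))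
      ((1 - τ) * Xf r p d ι N (p c) + τ * Xf r p d ι N c - Xf r p d ι N m)
      ((1 - τ) * Yf r p d ι N (p c) + τ * Yf r p d ι N c - Yf r p d ι N m) := by
  have hcK : InK (Real.pi / 3 * Lf r p d ι N g)
      (Real.pi / 3 * (Lf r p d ι N g + Wf d N g))
      (Xf r p d ι N c - Xf r p d ι N m) (Yf r p d ι N c - Yf r p d ι N m) := by
    obtain ⟨k, hk⟩ := hganc
    have := inv hpr hd hdr hN hιN k c g hgr hk
    rwa [hpg] at this
  have hpcK : InK (Real.pi / 3 * Lf r p d ι N g)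
      (Real.pi / 3 * (Lf r p d ι N g + Wf d N g))
      (Xf r p d ι N (p c) - Xf r p d ι N m) (Yf r p d ι N (p c) - Yf r p d ι N m) := by
    rcases hgpc with rfl | ⟨k, hk⟩
    · rw [hpg]
      exact InK.of_eq (InK.zero _ _) (by ring) (by ring)
    · have := inv hpr hd hdr hN hιN k (p c) g hgr hk
      rwa [hpg] at this
  exact InK.of_eq (InK.combo hpcK hcK h0 h1) (by ring) (by ring)

include hpr hd hdr hN hιN hι in
lemma planar_anc {c c' : V} (hcr : c ≠ r) (hc'r : c' ≠ r) (hne : c ≠ c') (hanc : Anc p c c')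
    {τ τ' : ℝ} (hτ0 : 0 ≤ τ) (hτ1 : τ ≤ 1) (hτ'0 : 0 ≤ τ') (hτ'1 : τ' ≤ 1)
    (hX : (1 - τ) * Xf r p d ι N (p c) + τ * Xf r p d ι N c
        = (1 - τ') * Xf r p d ι N (p c') + τ' * Xf r p d ι N c')
    (hY : (1 - τ) * Yf r p d ι N (p c) + τ * Yf r p d ι N c
        = (1 - τ') * Yf r p d ι N (p c') + τ' * Yf r p d ι N c') :
    ∃ w, ((1 - τ) * Xf r p d ι N (p c) + τ * Xf r p d ι N c = Xf r p d ι N w ∧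
          (1 - τ) * Yf r p d ι N (p c) + τ * Yf r p d ι N c = Yf r p d ι N w) ∧
      (w = p c ∨ w = c) ∧ (w = p c' ∨ w = c') := by
  obtain ⟨k, hk⟩ := hanc
  have hkpos : 0 < k := by
    rcases Nat.eq_zero_or_pos k with h | h
    · exfalso; apply hne; rw [h] at hk; simpa using hk.symm
    · exact h
  have hiter : p^[k-1+1] c' = p^[k] c' := by congr 1; omega
  have hpc₁ : p (p^[k-1] c') = c :=
    (Function.iterate_succ_apply' p (k-1) c').symm.trans (hiter.trans hk)
  have hc₁r : p^[k-1] c' ≠ r := fun h => hcr (by rw [← hpc₁, h, hpr])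
  have hanc₁ : Anc p (p^[k-1] c') c' := ⟨k-1, rfl⟩
  have hor : p^[k-1] c' = c' ∨ Anc p (p^[k-1] c') (p c') := by
    rcases Nat.eq_zero_or_pos (k-1) with h | h
    · left; rw [h]; simp
    · right
      refine ⟨k-2, ?_⟩
      rw [← Function.iterate_succ_apply]
      congr 1; omega
  have hK := edge_in_cone hpr hd hdr hN hιN (c := c') (m := c) (g := p^[k-1] c')
    hc₁r hc'r hpc₁ hanc₁ hor hτ'0 hτ'1
  rw [← hX, ← hY] at hK
  have hXc := Xf_eq (N := N) (ι := ι) hd hcr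
  have hYc := Yf_eq (N := N) (ι := ι) hd hcr
  have hpi := Real.pi_pos
  have hW₁ := Wf_pos (d := d) (N := N) hN (p^[k-1] c')
  have hLc0 := (range0 hpr hd hdr hN hιN c).1
  have hrange₁ := (range0 hpr hd hdr hN hιN (p^[k-1] c')).2
  have hnest := anc_nest hpr hd hN hιN 1 (p^[k-1] c') (by simpa using hpc₁)
  have hsin : 0 < Real.sin (Real.pi / 3 * (Lf r p d ι N (p^[k-1] c') + Wf d N (p^[k-1] c'))
      - th r p d ι N c) := by
    apply Real.sin_pos_of_pos_of_lt_pi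
    · rw [th]; nlinarith [hnest.1]
    · rw [th]; nlinarith
  obtain ⟨K1, K2⟩ := hK
  have e : ((1 - τ) * Yf r p d ι N (p c) + τ * Yf r p d ι N c - Yf r p d ι N c) *
        Real.cos (Real.pi / 3 * (Lf r p d ι N (p^[k-1] c') + Wf d N (p^[k-1] c'))) -
      ((1 - τ) * Xf r p d ι N (p c) + τ * Xf r p d ι N c - Xf r p d ι N c) *
        Real.sin (Real.pi / 3 * (Lf r p d ι N (p^[k-1] c') + Wf d N (p^[k-1] c'))) =
      (1 - τ) * Real.sin (Real.pi / 3 * (Lf r p d ι N (p^[k-1] c') + Wf d N (p^[k-1] c'))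
        - th r p d ι N c) := by
    rw [Real.sin_sub]
    nth_rewrite 1 [hXc, hYc]
    rw [hXc, hYc]
    ring
  rw [e] at K2
  have hτeq : τ = 1 := by nlinarith
  have hPX : (1 - τ) * Xf r p d ι N (p c) + τ * Xf r p d ι N c = Xf r p d ι N c := by
    rw [hτeq]; ring
  have hPY : (1 - τ) * Yf r p d ι N (p c) + τ * Yf r p d ι N c = Yf r p d ι N c := by
    rw [hτeq]; ring
  have hiter2 : p^[k-1] (p c') = c := by
    have : p^[k-1+1] c' = p^[k-1] (p c') := Function.iterate_succ_apply p (k-1) c'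
    rw [← this, hiter, hk]
  have hge : Xf r p d ι N c ≤ Xf r p d ι N (p c') :=
    (xgain hpr hd hdr hN hιN (k-1) (p c') c hiter2).1
  have hgt : Xf r p d ι N c < Xf r p d ι N c' :=
    (xgain hpr hd hdr hN hιN k c' c hk).2 hne
  have hX' : Xf r p d ι N c = (1 - τ') * Xf r p d ι N (p c') + τ' * Xf r p d ι N c' := by
    rw [← hPX]; exact hX
  have hY' : Yf r p d ι N c = (1 - τ') * Yf r p d ι N (p c') + τ' * Yf r p d ι N c' := by
    rw [← hPY]; exact hY
  have hτ'eq : τ' = 0 := by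
    rcases eq_or_lt_of_le hτ'0 with h | h
    · exact h.symm
    · exfalso
      have h1 : 0 ≤ (1 - τ') * (Xf r p d ι N (p c') - Xf r p d ι N c) :=
        mul_nonneg (by linarith) (by linarith)
      have h2 : 0 < τ' * (Xf r p d ι N c' - Xf r p d ι N c) := mul_pos h (by linarith)
      nlinarith [hX']
  have hXpc' : Xf r p d ι N (p c') = Xf r p d ι N c := by rw [hτ'eq] at hX'; linarith
  have hYpc' : Yf r p d ι N (p c') = Yf r p d ι N c := by rw [hτ'eq] at hY'; linarith
  have hwc : p c' = c := inj hpr hd hdr hN hιN hι hXpc' hYpc'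
  exact ⟨c, ⟨hPX, hPY⟩, Or.inr rfl, Or.inl hwc.symm⟩


include hpr hd hdr hN hιN hι in
lemma planar {c c' : V} (hcr : c ≠ r) (hc'r : c' ≠ r) (hne : c ≠ c')
    {τ τ' : ℝ} (hτ0 : 0 ≤ τ) (hτ1 : τ ≤ 1) (hτ'0 : 0 ≤ τ') (hτ'1 : τ' ≤ 1)
    (hX : (1 - τ) * Xf r p d ι N (p c) + τ * Xf r p d ι N c
        = (1 - τ') * Xf r p d ι N (p c') + τ' * Xf r p d ι N c')
    (hY : (1 - τ) * Yf r p d ι N (p c) + τ * Yf r p d ι N c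
        = (1 - τ') * Yf r p d ι N (p c') + τ' * Yf r p d ι N c') :
    ∃ w, ((1 - τ) * Xf r p d ι N (p c) + τ * Xf r p d ι N c = Xf r p d ι N w ∧
          (1 - τ) * Yf r p d ι N (p c) + τ * Yf r p d ι N c = Yf r p d ι N w) ∧
      (w = p c ∨ w = c) ∧ (w = p c' ∨ w = c') := by
  by_cases h1 : Anc p c c'
  · exact planar_anc hpr hd hdr hN hιN hι hcr hc'r hne h1 hτ0 hτ1 hτ'0 hτ'1 hX hY
  by_cases h2 : Anc p c' c
  · obtain ⟨w, ⟨hwX, hwY⟩, ho1, ho2⟩ :=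
      planar_anc hpr hd hdr hN hιN hι hc'r hcr (Ne.symm hne) h2 hτ'0 hτ'1 hτ0 hτ1
        hX.symm hY.symm
    exact ⟨w, ⟨hX ▸ hwX, hY ▸ hwY⟩, ho2, ho1⟩
  obtain ⟨m, g, g', hpg, hpg', hgr, hg'r, hgg', hga, hg'b, hma, hmb, hgpa, hg'pb⟩ :=
    lca hpr hd h1 h2
  have hKa := edge_in_cone hpr hd hdr hN hιN (c := c) (m := m) (g := g)
    hgr hcr hpg hga hgpa hτ0 hτ1
  have hKb := edge_in_cone hpr hd hdr hN hιN (c := c') (m := m) (g := g')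
    hg'r hc'r hpg' hg'b hg'pb hτ'0 hτ'1
  rw [← hX, ← hY] at hKb
  obtain ⟨hP0, hQ0⟩ := cone_disj hpr hd hdr hN hιN hι hgr hg'r hgg'
    (hpg.trans hpg'.symm) hKa hKb
  have hcm : c ≠ m := by rintro rfl; exact h1 hmb
  have hc'm : c' ≠ m := by rintro rfl; exact h2 hma
  obtain ⟨km, hkm⟩ := hma
  obtain ⟨km', hkm'⟩ := hmb
  have hgtc : Xf r p d ι N m < Xf r p d ι N c :=
    (xgain hpr hd hdr hN hιN km c m hkm).2 (Ne.symm hcm)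
  have hgtc' : Xf r p d ι N m < Xf r p d ι N c' :=
    (xgain hpr hd hdr hN hιN km' c' m hkm').2 (Ne.symm hc'm)
  have hmg : Anc p m g := ⟨1, by simpa using hpg⟩
  have hmg' : Anc p m g' := ⟨1, by simpa using hpg'⟩
  have hgec : Xf r p d ι N m ≤ Xf r p d ι N (p c) := by
    rcases hgpa with rfl | ⟨kg, hkg⟩
    · rw [hpg]
    · obtain ⟨k1, hk1⟩ := hmg
      have t1 := (xgain hpr hd hdr hN hιN k1 g m hk1).1
      have t2 := (xgain hpr hd hdr hN hιN kg (p c) g hkg).1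
      linarith
  have hgec' : Xf r p d ι N m ≤ Xf r p d ι N (p c') := by
    rcases hg'pb with rfl | ⟨kg, hkg⟩
    · rw [hpg']
    · obtain ⟨k1, hk1⟩ := hmg'
      have t1 := (xgain hpr hd hdr hN hιN k1 g' m hk1).1
      have t2 := (xgain hpr hd hdr hN hιN kg (p c') g' hkg).1
      linarith
  have hτeq : τ = 0 := by
    rcases eq_or_lt_of_le hτ0 with h | h
    · exact h.symm
    · exfalso
      have ha1 : 0 ≤ (1 - τ) * (Xf r p d ι N (p c) - Xf r p d ι N m) :=
        mul_nonneg (by linarith) (by linarith)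
      have ha2 : 0 < τ * (Xf r p d ι N c - Xf r p d ι N m) := mul_pos h (by linarith)
      nlinarith [hP0]
  have hτ'eq : τ' = 0 := by
    have hP0' : (1 - τ') * Xf r p d ι N (p c') + τ' * Xf r p d ι N c'
        - Xf r p d ι N m = 0 := by rw [← hX]; exact hP0
    rcases eq_or_lt_of_le hτ'0 with h | h
    · exact h.symm
    · exfalso
      have ha1 : 0 ≤ (1 - τ') * (Xf r p d ι N (p c') - Xf r p d ι N m) :=
        mul_nonneg (by linarith) (by linarith)
      have ha2 : 0 < τ' * (Xf r p d ι N c' - Xf r p d ι N m) := mul_pos h (by linarith)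
      nlinarith [hP0']
  have hXpc : Xf r p d ι N (p c) = Xf r p d ι N m := by rw [hτeq] at hP0; linarith
  have hYpc : Yf r p d ι N (p c) = Yf r p d ι N m := by rw [hτeq] at hQ0; linarith
  have hQ0' : (1 - τ') * Yf r p d ι N (p c') + τ' * Yf r p d ι N c'
      - Yf r p d ι N m = 0 := by rw [← hY]; exact hQ0
  have hP0' : (1 - τ') * Xf r p d ι N (p c') + τ' * Xf r p d ι N c'
      - Xf r p d ι N m = 0 := by rw [← hX]; exact hP0
  have hXpc' : Xf r p d ι N (p c') = Xf r p d ι N m := by rw [hτ'eq] at hP0'; linarith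
  have hYpc' : Yf r p d ι N (p c') = Yf r p d ι N m := by rw [hτ'eq] at hQ0'; linarith
  have hpp : p c = p c' := inj hpr hd hdr hN hιN hι (hXpc.trans hXpc'.symm)
    (hYpc.trans hYpc'.symm)
  refine ⟨p c, ⟨?_, ?_⟩, Or.inl rfl, Or.inl hpp⟩
  · rw [hτeq]; ring
  · rw [hτeq]; ring

end Main

end Construction

section Graph

open SimpleGraph Walk

variable {V : Type*} {G : SimpleGraph V} (hG : G.IsTree) (r : V)

include hG

lemma exists_shortest_path (u : V) :
    ∃ P : G.Walk r u, P.IsPath ∧ P.length = G.dist r u := by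
  classical
  obtain ⟨w, hw⟩ := hG.isConnected.exists_walk_length_eq_dist r u
  refine ⟨w.bypass, w.bypass_isPath, le_antisymm ?_ ?_⟩
  · calc w.bypass.length ≤ w.length := w.length_bypass_le
    _ = G.dist r u := hw
  · exact SimpleGraph.dist_le _

lemma path_concat {u v : V} (P : G.Walk r u) (hP : P.IsPath) (h : G.Adj u v)
    (hv : v ∉ P.support) : (P.concat h).IsPath := by
  classical
  rw [← isPath_reverse_iff, reverse_concat]
  exact hP.reverse.cons (by simpa [Walk.support_reverse] using hv)

lemma not_mem_shortest {u v : V} (P : G.Walk r u) (hP : P.length = G.dist r u)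
    (hv : G.dist r u < G.dist r v) : v ∉ P.support := by
  classical
  intro hmem
  have h1 : G.dist r v ≤ (P.takeUntil v hmem).length := SimpleGraph.dist_le _
  have h2 := P.length_takeUntil_le hmem
  omega

lemma parent_exists {v : V} (hv : v ≠ r) :
    ∃ u, G.Adj u v ∧ G.dist r u + 1 = G.dist r v := by
  have hd0 : G.dist r v ≠ 0 := by
    intro h0
    rw [hG.isConnected.dist_eq_zero_iff] at h0
    exact hv h0.symm
  obtain ⟨P, hP, hlen⟩ := exists_shortest_path hG r v
  cases hPr : P.reverse with
  | nil =>
    exfalso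
    have h0 : P.length = 0 := by
      simpa [Walk.length_reverse] using congrArg Walk.length hPr
    rw [hlen] at h0
    exact hd0 h0
  | @cons _ u _ h q =>
    refine ⟨u, h.symm, ?_⟩
    have hq : q.reverse.length = P.length - 1 := by
      have := congrArg Walk.length hPr
      rw [Walk.length_reverse] at this
      simp only [Walk.length_cons] at this
      rw [Walk.length_reverse]
      omega
    have h1 : G.dist r u ≤ P.length - 1 := by
      have := SimpleGraph.dist_le q.reverse
      omega
    obtain ⟨Pu, _, hPu⟩ := exists_shortest_path hG r u
    have h2 : G.dist r v ≤ G.dist r u + 1 := by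
      have := SimpleGraph.dist_le (Pu.concat h.symm)
      rw [Walk.length_concat] at this
      omega
    omega

lemma parent_unique {u u' v : V} (h : G.Adj u v) (h' : G.Adj u' v)
    (hd : G.dist r u + 1 = G.dist r v) (hd' : G.dist r u' + 1 = G.dist r v) : u = u' := by
  classical
  obtain ⟨P, hP, hlen⟩ := exists_shortest_path hG r u
  obtain ⟨P', hP', hlen'⟩ := exists_shortest_path hG r u'
  have hv : v ∉ P.support := not_mem_shortest hG r P hlen (by omega)
  have hv' : v ∉ P'.support := not_mem_shortest hG r P' hlen' (by omega)
  have hQ := path_concat hG r P hP h hv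
  have hQ' := path_concat hG r P' hP' h' hv'
  obtain ⟨x, _, huniq⟩ := hG.existsUnique_path r v
  have heq : P.concat h = P'.concat h' := by
    rw [huniq _ hQ, huniq _ hQ']
  obtain ⟨rfl, -⟩ := Walk.concat_inj heq
  rfl

lemma adj_orient {u v : V} (h : G.Adj u v) :
    G.dist r u + 1 = G.dist r v ∨ G.dist r v + 1 = G.dist r u := by
  classical
  obtain ⟨P, hP, hlen⟩ := exists_shortest_path hG r u
  obtain ⟨P', hP', hlen'⟩ := exists_shortest_path hG r v
  have h1 : G.dist r v ≤ G.dist r u + 1 := by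
    have := SimpleGraph.dist_le (P.concat h)
    rw [Walk.length_concat] at this
    omega
  have h2 : G.dist r u ≤ G.dist r v + 1 := by
    have := SimpleGraph.dist_le (P'.concat h.symm)
    rw [Walk.length_concat] at this
    omega
  by_contra hcon
  push_neg at hcon
  have hk : G.dist r u = G.dist r v := by omega
  by_cases hv : v ∈ P.support
  · have ht : G.dist r v ≤ (P.takeUntil v hv).length := SimpleGraph.dist_le _
    have hsum : (P.takeUntil v hv).length + (P.dropUntil v hv).length = P.length := by
      have := congrArg Walk.length (P.take_spec hv)
      rwa [Walk.length_append] at this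
    have hdrop : (P.dropUntil v hv).length = 0 := by omega
    have : v = u := Walk.eq_of_length_eq_zero hdrop
    subst this
    exact G.loopless.irrefl v h
  · have hQ := path_concat hG r P hP h hv
    obtain ⟨x, _, huniq⟩ := hG.existsUnique_path r v
    have heq : P.concat h = P' := by rw [huniq _ hQ, huniq _ hP']
    have := congrArg Walk.length heq
    rw [Walk.length_concat] at this
    omega

end Graph

end TreeDraw

/-- A straight-line drawing is planar if segments representing distinct edges
intersect only at images of shared endpoints. -/
def IsPlanarDrawing {V : Type*} (G : SimpleGraph V)
    (ρ : V → EuclideanSpace ℝ (Fin 2)) : Prop :=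
  ∀ u v u' v', G.Adj u v → G.Adj u' v' → s(u, v) ≠ s(u', v') →
    ∀ x, x ∈ segment ℝ (ρ u) (ρ v) → x ∈ segment ℝ (ρ u') (ρ v') →
      ∃ w, x = ρ w ∧ (w = u ∨ w = v) ∧ (w = u' ∨ w = v')

open TreeDraw

theorem stmt_18 {V : Type*} [Fintype V] (n : ℕ) (hn : 2 ≤ n)
    (hcard : Fintype.card V = n) (G : SimpleGraph V) (hG : G.IsTree) :
    ∃ ρ : V → EuclideanSpace ℝ (Fin 2), Function.Injective ρ ∧
      IsPlanarDrawing G ρ ∧ ∀ u v, G.Adj u v → dist (ρ u) (ρ v) = 1 := by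
  classical
  have hnonempty : Nonempty V := hG.isConnected.nonempty
  obtain ⟨r⟩ := hnonempty
  set d : V → ℕ := fun v => G.dist r v with hddef
  have hpex : ∀ v, v ≠ r → ∃ u, G.Adj u v ∧ G.dist r u + 1 = G.dist r v :=
    fun v hv => parent_exists hG r hv
  set p : V → V := fun v => if h : v = r then r else (hpex v h).choose with hpdef
  have hpr : p r = r := by simp [hpdef]
  have hpadj : ∀ v, v ≠ r → G.Adj (p v) v ∧ G.dist r (p v) + 1 = G.dist r v := by
    intro v hv
    have h1 := (hpex v hv).choose_spec
    have h2 : p v = (hpex v hv).choose := by simp [hpdef, dif_neg hv]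
    rw [h2]
    exact h1
  have hd : ∀ v, v ≠ r → d (p v) < d v := by
    intro v hv
    have := (hpadj v hv).2
    simp only [hddef]
    omega
  have hdr : d r = 0 := by simp [hddef]
  set N := Fintype.card V with hNdef
  set e := Fintype.equivFin V with hedef
  set ι : V → ℕ := fun v => (e v : ℕ) with hιdef
  have hιN : ∀ v, ι v < N := fun v => (e v).isLt
  have hι : Function.Injective ι := fun a b hab => e.injective (Fin.val_injective hab)
  have hN : 1 ≤ N := by
    rw [hNdef]
    exact Fintype.card_pos_iff.mpr ⟨r⟩
  set XF := Xf r p d ι N with hXFdef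
  set YF := Yf r p d ι N with hYFdef
  have horient : ∀ u v, G.Adj u v → (v ≠ r ∧ p v = u) ∨ (u ≠ r ∧ p u = v) := by
    intro u v huv
    rcases adj_orient hG r huv with h | h
    · left
      have hvr : v ≠ r := by
        intro hv
        rw [hv] at h
        rw [SimpleGraph.dist_self] at h
        omega
      exact ⟨hvr, parent_unique hG r (hpadj v hvr).1 huv (hpadj v hvr).2 h⟩
    · right
      have hur : u ≠ r := by
        intro hu
        rw [hu] at h
        rw [SimpleGraph.dist_self] at h
        omega
      exact ⟨hur, parent_unique hG r (hpadj u hur).1 huv.symm (hpadj u hur).2 h⟩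
  set ρ : V → EuclideanSpace ℝ (Fin 2) := fun v => !₂[XF v, YF v] with hρdef
  have hρ0 : ∀ v, ρ v 0 = XF v := fun v => rfl
  have hρ1 : ∀ v, ρ v 1 = YF v := fun v => rfl
  have hinj : Function.Injective ρ := by
    intro a b hab
    exact inj hpr hd hdr hN hιN hι (congrArg (fun z => z 0) hab) (congrArg (fun z => z 1) hab)
  have step : ∀ u v, G.Adj u v → ∃ c, c ≠ r ∧ s(u,v) = s(p c, c) ∧
      segment ℝ (ρ u) (ρ v) = segment ℝ (ρ (p c)) (ρ c) ∧
      (∀ w, (w = p c ∨ w = c) → (w = u ∨ w = v)) := by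
    intro u v huv
    rcases horient u v huv with ⟨hvr, hpv⟩ | ⟨hur, hpu⟩
    · exact ⟨v, hvr, by rw [hpv], by rw [hpv], fun w hw => by rw [hpv] at hw; exact hw⟩
    · refine ⟨u, hur, ?_, ?_, ?_⟩
      · rw [hpu]; exact Sym2.eq_swap
      · rw [hpu]; exact segment_symm ℝ _ _
      · intro w hw
        rw [hpu] at hw
        exact hw.symm
  have hseg : ∀ (c : V) (x : EuclideanSpace ℝ (Fin 2)), x ∈ segment ℝ (ρ (p c)) (ρ c) →
      ∃ τ : ℝ, 0 ≤ τ ∧ τ ≤ 1 ∧ x 0 = (1 - τ) * XF (p c) + τ * XF c ∧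
        x 1 = (1 - τ) * YF (p c) + τ * YF c := by
    intro c x hx
    obtain ⟨a, b, ha, hb, hab, hxe⟩ := hx
    have ha' : a = 1 - b := by linarith
    refine ⟨b, hb, by linarith, ?_, ?_⟩
    · rw [← hxe]
      have : (a • ρ (p c) + b • ρ c) 0 = a * (ρ (p c) 0) + b * (ρ c 0) := by
        simp [PiLp.add_apply, PiLp.smul_apply]
      rw [this, hρ0, hρ0, ha']
    · rw [← hxe]
      have : (a • ρ (p c) + b • ρ c) 1 = a * (ρ (p c) 1) + b * (ρ c 1) := by
        simp [PiLp.add_apply, PiLp.smul_apply]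
      rw [this, hρ1, hρ1, ha']
  refine ⟨ρ, hinj, ?_, ?_⟩
  · intro u v u' v' huv hu'v' hnee x hx hx'
    obtain ⟨c, hcr, hs1, hseq1, hmap1⟩ := step u v huv
    obtain ⟨c', hc'r, hs1', hseq1', hmap1'⟩ := step u' v' hu'v'
    have hcc' : c ≠ c' := by
      intro hcc
      apply hnee
      rw [hs1, hs1', hcc]
    rw [hseq1] at hx
    rw [hseq1'] at hx'
    obtain ⟨τ, hτ0, hτ1, hx0, hx1⟩ := hseg c x hx
    obtain ⟨τ', hτ'0, hτ'1, hx0', hx1'⟩ := hseg c' x hx'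
    have hX : (1 - τ) * XF (p c) + τ * XF c = (1 - τ') * XF (p c') + τ' * XF c' := by
      rw [← hx0, ← hx0']
    have hY : (1 - τ) * YF (p c) + τ * YF c = (1 - τ') * YF (p c') + τ' * YF c' := by
      rw [← hx1, ← hx1']
    obtain ⟨w, ⟨hwX, hwY⟩, ho1, ho2⟩ :=
      planar hpr hd hdr hN hιN hι hcr hc'r hcc' hτ0 hτ1 hτ'0 hτ'1 hX hY
    refine ⟨w, ?_, hmap1 w ho1, hmap1' w ho2⟩
    ext i
    fin_cases i
    · exact (hx0.trans hwX).trans (hρ0 w).symm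
    · exact (hx1.trans hwY).trans (hρ1 w).symm
  · have hdist1 : ∀ c, c ≠ r → dist (ρ (p c)) (ρ c) = 1 := by
      intro c hc
      rw [EuclideanSpace.dist_eq, Fin.sum_univ_two, hρ0, hρ0, hρ1, hρ1]
      have hXc := Xf_eq (r := r) (p := p) (d := d) (N := N) (ι := ι) hd hc
      have hYc := Yf_eq (r := r) (p := p) (d := d) (N := N) (ι := ι) hd hc
      have e1 : dist (XF (p c)) (XF c) ^ 2 = Real.cos (th r p d ι N c) ^ 2 := by
        rw [Real.dist_eq, sq_abs, hXFdef, hXc]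
        ring
      have e2 : dist (YF (p c)) (YF c) ^ 2 = Real.sin (th r p d ι N c) ^ 2 := by
        rw [Real.dist_eq, sq_abs, hYFdef, hYc]
        ring
      rw [e1, e2, Real.cos_sq_add_sin_sq]
      exact Real.sqrt_one
    intro u v huv
    rcases horient u v huv with ⟨hvr, hpv⟩ | ⟨hur, hpu⟩
    · rw [← hpv]
      exact hdist1 v hvr
    · rw [← hpu, dist_comm]
      exact hdist1 u hur
end
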